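/- arXiv:2109.02565 — 4 statements merged into one kernel-verified Lean document; each statement's English description precedes it below -/
import Mathlib

section
/- There is an absolute constant C such that for every odd differentiable g : ℝ → ℝ with g and g' square-integrable, every y ≥ 0 and every α > 0: (i) |(1/α)∫_{−α}^{α} g(y+t) dt| ≤ C·min{ (y+α)^{1/2}, ⟨α⟩^{−1/2} }·‖g‖_{H¹}; (ii) |(1/α)∫_0^{α} ( g(y+t) − g(y−t) ) dt| ≤ ∫_{|t| ≤ α} |g'(y+t)| dt; (iii) |(1/α)∫_0^{α} ( g(y+t) − g(y−t) ) dt| ≤ C·min{ α^{1/2}, α^{−1/2} }·‖g‖_{H¹}. -/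
open MeasureTheory Real Set Filter

/-- Sliding average `⨍_α f(y) = (1/α) ∫_{y-α}^{y} f(z) dz`. -/
noncomputable def fint (α : ℝ) (f : ℝ → ℝ) (y : ℝ) : ℝ :=
  (1 / α) * ∫ z in (y - α)..y, f z

/-- Finite difference slope `Δ_α f(y) = (f(y) - f(y-α))/α`. -/
noncomputable def slopeOp (α : ℝ) (f : ℝ → ℝ) (y : ℝ) : ℝ :=
  (f y - f (y - α)) / α

/-- The profile `L_s(y) = (2s/π) arctan((1+s²/3) y)`. -/
noncomputable def Ls (s y : ℝ) : ℝ := (2 * s / Real.pi) * Real.arctan ((1 + s ^ 2 / 3) * y)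

/-- `δ_α[f,g](y) = ⨍_α f ⨍_α g - ⨍_{-α} f ⨍_{-α} g`. -/
noncomputable def deltaOp (α : ℝ) (f g : ℝ → ℝ) (y : ℝ) : ℝ :=
  fint α f y * fint α g y - fint (-α) f y * fint (-α) g y

/-- `J_α[f,g](y) = ⨍_α f ⨍_α g - 2 f g + ⨍_{-α} f ⨍_{-α} g`. -/
noncomputable def Jop (α : ℝ) (f g : ℝ → ℝ) (y : ℝ) : ℝ :=
  fint α f y * fint α g y - 2 * f y * g y + fint (-α) f y * fint (-α) g y

/-- The `H¹` norm `(∫ g² + ∫ (g')²)^{1/2}`. -/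
noncomputable def H1norm (g : ℝ → ℝ) : ℝ :=
  Real.sqrt ((∫ y : ℝ, g y ^ 2) + ∫ y : ℝ, deriv g y ^ 2)

set_option maxHeartbeats 1000000

private lemma abs_int_le' (f : ℝ → ℝ) {a b : ℝ} (h : a ≤ b) :
    |∫ x in a..b, f x| ≤ ∫ x in Icc a b, |f x| := by
  rw [intervalIntegral.integral_of_le h, integral_Icc_eq_integral_Ioc]
  calc |∫ x in Ioc a b, f x| = ‖∫ x in Ioc a b, f x‖ := (Real.norm_eq_abs _).symm
    _ ≤ ∫ x in Ioc a b, ‖f x‖ := norm_integral_le_integral_norm f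
    _ = ∫ x in Ioc a b, |f x| := by simp [Real.norm_eq_abs]

private lemma integrableOn_Icc_of_sq' {f : ℝ → ℝ} (hm : AEStronglyMeasurable f volume)
    (hf : Integrable (fun x => f x ^ 2) volume) (a b : ℝ) :
    IntegrableOn f (Icc a b) volume := by
  have hbound : IntegrableOn (fun x => (1 + f x ^ 2) / 2) (Icc a b) volume := by
    apply Integrable.div_const
    exact (integrableOn_const (C := (1:ℝ)) measure_Icc_lt_top.ne).add hf.integrableOn
  refine Integrable.mono' hbound hm.restrict (ae_of_all _ fun x => ?_)
  rw [Real.norm_eq_abs]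
  nlinarith [sq_nonneg (|f x| - 1), sq_abs (f x), abs_nonneg (f x)]

private lemma cs_bound' {f : ℝ → ℝ} (hm : AEStronglyMeasurable f volume)
    (hf : Integrable (fun x => f x ^ 2) volume) {a b : ℝ} (hab : a ≤ b) :
    ∫ t in Icc a b, |f t| ≤ Real.sqrt (b - a) * Real.sqrt (∫ x : ℝ, f x ^ 2) := by
  set I := ∫ t in Icc a b, |f t| with hIdef
  set B' := ∫ t in Icc a b, f t ^ 2 with hB'def
  set B := ∫ x : ℝ, f x ^ 2 with hBdef
  have hI0 : 0 ≤ I := setIntegral_nonneg measurableSet_Icc fun x _ => abs_nonneg _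
  have hB'0 : 0 ≤ B' := setIntegral_nonneg measurableSet_Icc fun x _ => sq_nonneg _
  have hB'B : B' ≤ B := setIntegral_le_integral hf (ae_of_all _ fun x => sq_nonneg _)
  have hB0 : 0 ≤ B := le_trans hB'0 hB'B
  have hIf : IntegrableOn f (Icc a b) volume := integrableOn_Icc_of_sq' hm hf a b
  have hL0 : 0 ≤ b - a := sub_nonneg.2 hab
  have key : ∀ ε : ℝ, 0 < ε → 2 * ε * I ≤ ε ^ 2 * (b - a) + B' := by
    intro ε hε
    have h1 : ∫ t in Icc a b, 2 * ε * |f t| ≤ ∫ t in Icc a b, (ε ^ 2 + f t ^ 2) := by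
      refine setIntegral_mono_on (hIf.abs.const_mul _) ?_ measurableSet_Icc fun x _ => ?_
      · exact (integrableOn_const (C := ε ^ 2) measure_Icc_lt_top.ne).add hf.integrableOn
      · nlinarith [sq_nonneg (ε - |f x|), sq_abs (f x)]
    have h2 : ∫ t in Icc a b, 2 * ε * |f t| = 2 * ε * I := by
      rw [hIdef, ← integral_const_mul]
    have h3 : ∫ t in Icc a b, (ε ^ 2 + f t ^ 2) = ε ^ 2 * (b - a) + B' := by
      rw [integral_add (integrableOn_const (C := ε ^ 2) measure_Icc_lt_top.ne) hf.integrableOn,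
        setIntegral_const, Real.volume_real_Icc_of_le hab, smul_eq_mul]
      ring
    linarith
  rcases hI0.eq_or_lt with h0 | hIpos
  · rw [← h0]; positivity
  · have hL : 0 < b - a := by
      rcases hL0.eq_or_lt with hz | hz
      · exfalso
        have : Icc a b = Icc a a := by
          have : b = a := by linarith
          rw [this]
        have hIz : I = 0 := by
          rw [hIdef]
          have hmz : volume (Icc a b) = 0 := by
            rw [Real.volume_Icc, ← hz]; simp
          rw [Measure.restrict_eq_zero.2 hmz, integral_zero_measure]
        linarith
      · exact hz
    have hk := key (I / (b - a)) (by positivity)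
    have hsq : I ^ 2 ≤ (b - a) * B' := by
      have hLne : (b - a) ≠ 0 := hL.ne'
      set J := I / (b - a) with hJdef
      have hJ : J * (b - a) = I := div_mul_cancel₀ I hLne
      rw [← hJ] at hk
      have h5 : J ^ 2 * (b - a) ≤ B' := by nlinarith [hk]
      calc I ^ 2 = J ^ 2 * (b - a) * (b - a) := by rw [← hJ]; ring
        _ ≤ B' * (b - a) := mul_le_mul_of_nonneg_right h5 hL0
        _ = (b - a) * B' := by ring
    calc I = Real.sqrt (I ^ 2) := (Real.sqrt_sq hI0).symm
      _ ≤ Real.sqrt ((b - a) * B') := Real.sqrt_le_sqrt hsq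
      _ = Real.sqrt (b - a) * Real.sqrt B' := Real.sqrt_mul hL0 _
      _ ≤ Real.sqrt (b - a) * Real.sqrt B :=
          mul_le_mul_of_nonneg_left (Real.sqrt_le_sqrt hB'B) (Real.sqrt_nonneg _)

/-- Bounds on symmetric averages of a general odd `H¹` function. -/
theorem odd_average_bounds :
    ∃ C : ℝ, 0 < C ∧ ∀ g : ℝ → ℝ, (∀ x : ℝ, g (-x) = - g x) → Differentiable ℝ g →
      MemLp g 2 volume → MemLp (deriv g) 2 volume →
      ∀ y : ℝ, 0 ≤ y → ∀ α : ℝ, 0 < α →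
      (|(1 / α) * ∫ t in (-α)..α, g (y + t)|
          ≤ C * min (Real.sqrt (y + α)) ((1 + α ^ 2) ^ (-(1:ℝ)/4)) * H1norm g) ∧
      (|(1 / α) * ∫ t in (0:ℝ)..α, (g (y + t) - g (y - t))|
          ≤ ∫ t in Set.Icc (-α) α, |deriv g (y + t)|) ∧
      (|(1 / α) * ∫ t in (0:ℝ)..α, (g (y + t) - g (y - t))|
          ≤ C * min (α ^ ((1:ℝ)/2)) (α ^ (-(1:ℝ)/2)) * H1norm g) := by
  
  refine ⟨4, by norm_num, ?_⟩
  intro g hodd hdiff hg2 hg'2 y hy α hα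
  have hgc : Continuous g := hdiff.continuous
  have hg'm : AEStronglyMeasurable (deriv g) volume := (measurable_deriv g).aestronglyMeasurable
  set A := ∫ x : ℝ, g x ^ 2 with hAdef
  set B := ∫ x : ℝ, deriv g x ^ 2 with hBdef
  have hgsq : Integrable (fun x => g x ^ 2) volume := hg2.integrable_sq
  have hg'sq : Integrable (fun x => deriv g x ^ 2) volume := hg'2.integrable_sq
  have hA0 : 0 ≤ A := integral_nonneg fun x => sq_nonneg _
  have hB0 : 0 ≤ B := integral_nonneg fun x => sq_nonneg _
  have hH : H1norm g = Real.sqrt (A + B) := rfl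
  have hH0 : 0 ≤ H1norm g := Real.sqrt_nonneg _
  have hsA : Real.sqrt A ≤ H1norm g := by rw [hH]; exact Real.sqrt_le_sqrt (by linarith)
  have hsB : Real.sqrt B ≤ H1norm g := by rw [hH]; exact Real.sqrt_le_sqrt (by linarith)
  have hg0 : g 0 = 0 := by have h := hodd 0; rw [neg_zero] at h; linarith
  have hg'iic : ∀ a b : ℝ, IntervalIntegrable (deriv g) volume a b := by
    intro a b
    rw [intervalIntegrable_iff]
    exact (integrableOn_Icc_of_sq' hg'm hg'sq (a ⊓ b) (a ⊔ b)).mono_set Set.uIoc_subset_uIcc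
  have hftc : ∀ a b : ℝ, g b - g a = ∫ x in a..b, deriv g x :=
    fun a b => (intervalIntegral.integral_deriv_eq_sub (fun x _ => hdiff x) (hg'iic a b)).symm
  have hincr : ∀ a b : ℝ, a ≤ b → |g b - g a| ≤ Real.sqrt (b - a) * Real.sqrt B := by
    intro a b hab
    calc |g b - g a| = |∫ x in a..b, deriv g x| := by rw [hftc a b]
      _ ≤ ∫ x in Icc a b, |deriv g x| := abs_int_le' _ hab
      _ ≤ _ := cs_bound' hg'm hg'sq hab
  have habsg : ∀ z : ℝ, |g z| ≤ Real.sqrt |z| * Real.sqrt B := by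
    intro z
    rcases le_total 0 z with h | h
    · have h2 := hincr 0 z h
      rw [hg0, sub_zero, sub_zero] at h2
      rwa [abs_of_nonneg h]
    · have h2 := hincr 0 (-z) (by linarith)
      rw [hg0, sub_zero, sub_zero, hodd z, abs_neg] at h2
      rwa [abs_of_nonpos h]
  have hsum : Integrable (fun x => g x ^ 2 + deriv g x ^ 2) volume := hgsq.add hg'sq
  have hprod : Integrable (fun x => 2 * g x * deriv g x) volume := by
    refine Integrable.mono' hsum
      ((hgc.aestronglyMeasurable.const_mul 2).mul hg'm) (ae_of_all _ fun x => ?_)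
    rw [Real.norm_eq_abs]
    have h1 : |2 * g x * deriv g x| = 2 * (|g x| * |deriv g x|) := by
      rw [abs_mul, abs_mul]; norm_num; ring
    rw [h1]
    nlinarith [sq_nonneg (|g x| - |deriv g x|), sq_abs (g x), sq_abs (deriv g x)]
  have hsup : ∀ z : ℝ, |g z| ≤ H1norm g := by
    have key : ∀ z : ℝ, 0 ≤ z → g z ^ 2 ≤ A + B := by
      intro z hz
      have hd : ∀ x ∈ uIcc (0:ℝ) z, HasDerivAt (fun u => g u ^ 2) (2 * g x * deriv g x) x := by
        intro x _
        have h := (hdiff x).hasDerivAt.pow 2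
        norm_num at h
        exact h
      have heq := intervalIntegral.integral_eq_sub_of_hasDerivAt hd hprod.intervalIntegrable
      have h1 : (∫ x in (0:ℝ)..z, 2 * g x * deriv g x)
          ≤ ∫ x in (0:ℝ)..z, (g x ^ 2 + deriv g x ^ 2) :=
        intervalIntegral.integral_mono_on hz hprod.intervalIntegrable
          hsum.intervalIntegrable
          (fun x _ => by nlinarith [sq_nonneg (g x - deriv g x)])
      have h2 : (∫ x in (0:ℝ)..z, (g x ^ 2 + deriv g x ^ 2)) ≤ A + B := by
        rw [intervalIntegral.integral_of_le hz]
        calc (∫ x in Ioc (0:ℝ) z, (g x ^ 2 + deriv g x ^ 2))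
            ≤ ∫ x : ℝ, (g x ^ 2 + deriv g x ^ 2) :=
              setIntegral_le_integral hsum (ae_of_all _ fun x => by positivity)
          _ = A + B := integral_add hgsq hg'sq
      rw [hg0] at heq
      nlinarith [heq, h1, h2]
    intro z
    rcases le_total 0 z with h | h
    · calc |g z| = Real.sqrt (g z ^ 2) := (Real.sqrt_sq_eq_abs _).symm
        _ ≤ Real.sqrt (A + B) := Real.sqrt_le_sqrt (key z h)
        _ = H1norm g := hH.symm
    · have h3 : |g z| = |g (-z)| := by rw [hodd z, abs_neg]
      rw [h3]
      calc |g (-z)| = Real.sqrt (g (-z) ^ 2) := (Real.sqrt_sq_eq_abs _).symm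
        _ ≤ Real.sqrt (A + B) := Real.sqrt_le_sqrt (key (-z) (by linarith))
        _ = H1norm g := hH.symm
    -- shared numeric facts
  have hαne : α ≠ 0 := hα.ne'
  have hsα : 0 < Real.sqrt α := Real.sqrt_pos.2 hα
  have hss : Real.sqrt α * Real.sqrt α = α := Real.mul_self_sqrt hα.le
  have hdivinv : Real.sqrt α / α = (Real.sqrt α)⁻¹ := Real.sqrt_div_self
  have habs1 : ∀ X : ℝ, |1 / α * X| = (1 / α) * |X| := fun X => by
    rw [abs_mul, abs_of_pos (by positivity : (0:ℝ) < 1 / α)]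
  have hmin : ∀ (X b1 b2 : ℝ), |X| ≤ 4 * b1 * H1norm g → |X| ≤ 4 * b2 * H1norm g →
      |X| ≤ 4 * min b1 b2 * H1norm g := by
    intro X b1 b2 h1 h2
    rcases le_total b1 b2 with h | h
    · rwa [min_eq_left h]
    · rwa [min_eq_right h]
  have hq2 : (1:ℝ)/2 ≤ (2:ℝ) ^ (-(1:ℝ)/4) := by
    have h1 : ((2:ℝ)) ^ ((1:ℝ)/4) ≤ 2 := by
      calc ((2:ℝ)) ^ ((1:ℝ)/4) ≤ (2:ℝ) ^ (1:ℝ) :=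
            Real.rpow_le_rpow_of_exponent_le (by norm_num) (by norm_num)
        _ = 2 := Real.rpow_one 2
    have h2 : (0:ℝ) < (2:ℝ) ^ ((1:ℝ)/4) := Real.rpow_pos_of_pos (by norm_num) _
    have h3 := one_div_le_one_div_of_le h2 h1
    calc (1:ℝ)/2 ≤ 1 / ((2:ℝ)) ^ ((1:ℝ)/4) := h3
      _ = (2:ℝ) ^ (-(1:ℝ)/4) := by
          rw [show (-(1:ℝ)/4) = -((1:ℝ)/4) by norm_num, Real.rpow_neg (by norm_num : (0:ℝ) ≤ 2),
            one_div]
  have hα12 : α ^ (-(1:ℝ)/2) = (Real.sqrt α)⁻¹ := by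
    rw [show (-(1:ℝ)/2) = -((1:ℝ)/2) by norm_num, Real.rpow_neg hα.le, ← Real.sqrt_eq_rpow]
  have hsqrtht : α ^ ((1:ℝ)/2) = Real.sqrt α := (Real.sqrt_eq_rpow α).symm
  have hs2 : Real.sqrt 2 ≤ 2 := by
    nlinarith [Real.sq_sqrt (show (0:ℝ) ≤ 2 by norm_num), Real.sqrt_nonneg 2]
  -- part (ii) preliminaries
  have hK : (∫ t in Icc (-α) α, |deriv g (y + t)|) = ∫ z in Icc (y - α) (y + α), |deriv g z| := by
    calc (∫ t in Icc (-α) α, |deriv g (y + t)|)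
        = ∫ t in (-α)..α, |deriv g (y + t)| := by
          rw [intervalIntegral.integral_of_le (by linarith : -α ≤ α), integral_Icc_eq_integral_Ioc]
      _ = ∫ z in (y + -α)..(y + α), |deriv g z| :=
          intervalIntegral.integral_comp_add_left (fun z => |deriv g z|) y
      _ = ∫ z in Icc (y - α) (y + α), |deriv g z| := by
          rw [show y + -α = y - α by ring,
            intervalIntegral.integral_of_le (by linarith : y - α ≤ y + α),
            integral_Icc_eq_integral_Ioc]
  have hpart2 : |(1 / α) * ∫ t in (0:ℝ)..α, (g (y + t) - g (y - t))|
      ≤ ∫ z in Icc (y - α) (y + α), |deriv g z| := by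
    have hb : ∀ t ∈ Set.uIoc (0:ℝ) α, ‖g (y + t) - g (y - t)‖
        ≤ ∫ z in Icc (y - α) (y + α), |deriv g z| := by
      intro t ht
      rw [Set.uIoc_of_le hα.le] at ht
      rw [Real.norm_eq_abs]
      calc |g (y + t) - g (y - t)| = |∫ x in (y - t)..(y + t), deriv g x| := by rw [← hftc]
        _ ≤ ∫ x in Icc (y - t) (y + t), |deriv g x| := abs_int_le' _ (by linarith [ht.1])
        _ ≤ ∫ z in Icc (y - α) (y + α), |deriv g z| :=
            setIntegral_mono_set (integrableOn_Icc_of_sq' hg'm hg'sq _ _).abs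
              (ae_of_all _ fun x => abs_nonneg _)
              ((Icc_subset_Icc (by linarith [ht.2]) (by linarith [ht.2])).eventuallyLE)
    have h2 := intervalIntegral.norm_integral_le_of_norm_le_const hb
    rw [sub_zero, abs_of_pos hα, Real.norm_eq_abs] at h2
    rw [habs1]
    calc (1/α) * |∫ t in (0:ℝ)..α, (g (y+t) - g (y-t))|
        ≤ (1/α) * ((∫ z in Icc (y - α) (y + α), |deriv g z|) * α) :=
          mul_le_mul_of_nonneg_left h2 (by positivity)
      _ = ∫ z in Icc (y - α) (y + α), |deriv g z| := by field_simp
  refine ⟨?_, ?_, ?_⟩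
  · -- part (i)
    apply hmin
    · have hpt : ∀ t ∈ Set.uIoc (-α) α, ‖g (y + t)‖ ≤ Real.sqrt (y + α) * Real.sqrt B := by
        intro t ht
        rw [Set.uIoc_of_le (by linarith : -α ≤ α)] at ht
        rw [Real.norm_eq_abs]
        refine (habsg (y + t)).trans
          (mul_le_mul_of_nonneg_right (Real.sqrt_le_sqrt ?_) (Real.sqrt_nonneg _))
        exact abs_le.2 ⟨by linarith [ht.1], by linarith [ht.2]⟩
      have h2 := intervalIntegral.norm_integral_le_of_norm_le_const hpt
      rw [show α - -α = 2*α by ring, abs_of_pos (by linarith : (0:ℝ) < 2*α),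
        Real.norm_eq_abs] at h2
      rw [habs1]
      calc (1/α) * |∫ t in (-α)..α, g (y+t)|
          ≤ (1/α) * (Real.sqrt (y+α) * Real.sqrt B * (2*α)) :=
            mul_le_mul_of_nonneg_left h2 (by positivity)
        _ = 2 * (Real.sqrt (y+α) * Real.sqrt B) := by field_simp
        _ ≤ 4 * Real.sqrt (y + α) * H1norm g := by
            nlinarith [mul_le_mul_of_nonneg_left hsB (Real.sqrt_nonneg (y+α)),
              Real.sqrt_nonneg (y+α), hH0, Real.sqrt_nonneg B]
    · have hbase : (0:ℝ) < 1 + α^2 := by positivity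
      have hq : (0:ℝ) < (1+α^2) ^ ((1:ℝ)/4) := Real.rpow_pos_of_pos hbase _
      rcases le_total α 1 with hα1 | hα1
      · have h14 : (1+α^2) ^ ((1:ℝ)/4) ≤ 2 := by
          calc (1+α^2) ^ ((1:ℝ)/4) ≤ (2:ℝ) ^ ((1:ℝ)/4) :=
                Real.rpow_le_rpow hbase.le (by nlinarith) (by norm_num)
            _ ≤ (2:ℝ) ^ (1:ℝ) := Real.rpow_le_rpow_of_exponent_le (by norm_num) (by norm_num)
            _ = 2 := Real.rpow_one 2
        have hPhalf : (1:ℝ)/2 ≤ (1+α^2) ^ (-(1:ℝ)/4) := by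
          rw [show (-(1:ℝ)/4) = -((1:ℝ)/4) by norm_num, Real.rpow_neg hbase.le, ← one_div]
          exact one_div_le_one_div_of_le hq h14
        have hpt : ∀ t ∈ Set.uIoc (-α) α, ‖g (y + t)‖ ≤ H1norm g := fun t _ => by
          rw [Real.norm_eq_abs]; exact hsup _
        have h2 := intervalIntegral.norm_integral_le_of_norm_le_const hpt
        rw [show α - -α = 2*α by ring, abs_of_pos (by linarith : (0:ℝ) < 2*α),
          Real.norm_eq_abs] at h2
        rw [habs1]
        calc (1/α) * |∫ t in (-α)..α, g (y+t)| ≤ (1/α) * (H1norm g * (2*α)) :=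
              mul_le_mul_of_nonneg_left h2 (by positivity)
          _ = 2 * H1norm g := by field_simp
          _ ≤ 4 * (1+α^2) ^ (-(1:ℝ)/4) * H1norm g := by nlinarith [hPhalf, hH0]
      · have hchg : (∫ t in (-α)..α, g (y + t)) = ∫ z in (y - α)..(y + α), g z := by
          rw [intervalIntegral.integral_comp_add_left g y, show y + -α = y - α by ring]
        have hcs := cs_bound' hgc.aestronglyMeasurable hgsq (show y - α ≤ y + α by linarith)
        rw [show y + α - (y - α) = 2*α by ring] at hcs
        have habs2 : |∫ t in (-α)..α, g (y+t)| ≤ Real.sqrt (2*α) * Real.sqrt A := by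
          rw [hchg]
          exact (abs_int_le' g (by linarith)).trans hcs
        have hPα : (2:ℝ) ^ (-(1:ℝ)/4) * α ^ (-(1:ℝ)/2) ≤ (1+α^2) ^ (-(1:ℝ)/4) := by
          have h1 : (2*α^2 : ℝ) ^ (-(1:ℝ)/4) ≤ (1+α^2 : ℝ) ^ (-(1:ℝ)/4) :=
            Real.rpow_le_rpow_of_nonpos (by positivity) (by nlinarith) (by norm_num)
          have h2 : (2*α^2 : ℝ) ^ (-(1:ℝ)/4) = (2:ℝ) ^ (-(1:ℝ)/4) * ((α:ℝ)^2) ^ (-(1:ℝ)/4) :=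
            Real.mul_rpow (by norm_num) (by positivity)
          have h3 : ((α:ℝ)^2) ^ (-(1:ℝ)/4) = α ^ (-(1:ℝ)/2) := by
            rw [← Real.rpow_natCast α 2, ← Real.rpow_mul hα.le]
            norm_num
          rw [h2, h3] at h1
          exact h1
        have hf2 : (1/2 : ℝ) * (Real.sqrt α)⁻¹ ≤ (1+α^2) ^ (-(1:ℝ)/4) := by
          calc (1/2 : ℝ) * (Real.sqrt α)⁻¹ ≤ (2:ℝ) ^ (-(1:ℝ)/4) * (Real.sqrt α)⁻¹ :=
                mul_le_mul_of_nonneg_right hq2 (inv_nonneg.2 (Real.sqrt_nonneg α))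
            _ = (2:ℝ) ^ (-(1:ℝ)/4) * α ^ (-(1:ℝ)/2) := by rw [hα12]
            _ ≤ _ := hPα
        rw [habs1]
        calc (1/α) * |∫ t in (-α)..α, g (y+t)|
            ≤ (1/α) * (Real.sqrt (2*α) * Real.sqrt A) :=
              mul_le_mul_of_nonneg_left habs2 (by positivity)
          _ = Real.sqrt 2 * Real.sqrt A * (Real.sqrt α)⁻¹ := by
              rw [Real.sqrt_mul (by norm_num : (0:ℝ) ≤ 2) α, ← hdivinv]
              field_simp
          _ ≤ 2 * Real.sqrt A * (Real.sqrt α)⁻¹ :=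
              mul_le_mul_of_nonneg_right
                (mul_le_mul_of_nonneg_right hs2 (Real.sqrt_nonneg A))
                (inv_nonneg.2 (Real.sqrt_nonneg α))
          _ ≤ 2 * H1norm g * (Real.sqrt α)⁻¹ :=
              mul_le_mul_of_nonneg_right
                (mul_le_mul_of_nonneg_left hsA (by norm_num))
                (inv_nonneg.2 (Real.sqrt_nonneg α))
          _ ≤ 4 * (1+α^2) ^ (-(1:ℝ)/4) * H1norm g := by
              nlinarith [mul_le_mul_of_nonneg_right hf2 hH0,
                inv_nonneg.2 (Real.sqrt_nonneg α), hH0]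
  · -- part (ii)
    rw [hK]
    exact hpart2
  · -- part (iii)
    apply hmin
    · -- α^{1/2} bound
      have hcs := cs_bound' hg'm hg'sq (show y - α ≤ y + α by linarith)
      rw [show y + α - (y - α) = 2*α by ring] at hcs
      refine (hpart2.trans hcs).trans ?_
      calc Real.sqrt (2*α) * Real.sqrt B
          = Real.sqrt 2 * Real.sqrt α * Real.sqrt B := by
            rw [Real.sqrt_mul (by norm_num : (0:ℝ) ≤ 2) α]
        _ ≤ 2 * Real.sqrt α * Real.sqrt B :=
            mul_le_mul_of_nonneg_right
              (mul_le_mul_of_nonneg_right hs2 (Real.sqrt_nonneg α)) (Real.sqrt_nonneg B)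
        _ ≤ 2 * Real.sqrt α * H1norm g := mul_le_mul_of_nonneg_left hsB (by positivity)
        _ ≤ 4 * α ^ ((1:ℝ)/2) * H1norm g := by
            rw [hsqrtht]
            nlinarith [mul_nonneg hsα.le hH0]
    · -- α^{-1/2} bound
      have hintp : IntervalIntegrable (fun t => g (y + t)) volume 0 α :=
        (hgc.comp (continuous_const.add continuous_id)).intervalIntegrable 0 α
      have hintm : IntervalIntegrable (fun t => g (y - t)) volume 0 α :=
        (hgc.comp (continuous_const.sub continuous_id)).intervalIntegrable 0 α
      have hsplit : (∫ t in (0:ℝ)..α, (g (y+t) - g (y-t)))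
          = (∫ t in (0:ℝ)..α, g (y+t)) - ∫ t in (0:ℝ)..α, g (y-t) :=
        intervalIntegral.integral_sub hintp hintm
      have hcs1 := cs_bound' hgc.aestronglyMeasurable hgsq (show y ≤ y + α by linarith)
      rw [show y + α - y = α by ring] at hcs1
      have hcs2 := cs_bound' hgc.aestronglyMeasurable hgsq (show y - α ≤ y by linarith)
      rw [show y - (y - α) = α by ring] at hcs2
      have hplus : |∫ t in (0:ℝ)..α, g (y + t)| ≤ Real.sqrt α * Real.sqrt A := by
        rw [intervalIntegral.integral_comp_add_left g y, add_zero]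
        exact (abs_int_le' g (by linarith)).trans hcs1
      have hminus : |∫ t in (0:ℝ)..α, g (y - t)| ≤ Real.sqrt α * Real.sqrt A := by
        rw [intervalIntegral.integral_comp_sub_left g y, sub_zero]
        exact (abs_int_le' g (by linarith)).trans hcs2
      rw [habs1]
      calc (1/α) * |∫ t in (0:ℝ)..α, (g (y+t) - g (y-t))|
          ≤ (1/α) * (2 * (Real.sqrt α * Real.sqrt A)) := by
            refine mul_le_mul_of_nonneg_left ?_ (by positivity)
            rw [hsplit]
            calc |(∫ t in (0:ℝ)..α, g (y+t)) - ∫ t in (0:ℝ)..α, g (y-t)|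
                ≤ |∫ t in (0:ℝ)..α, g (y+t)| + |∫ t in (0:ℝ)..α, g (y-t)| := abs_sub _ _
              _ ≤ 2 * (Real.sqrt α * Real.sqrt A) := by linarith [hplus, hminus]
        _ = 2 * Real.sqrt A * (Real.sqrt α)⁻¹ := by
            rw [← hdivinv]
            field_simp
        _ ≤ 2 * H1norm g * (Real.sqrt α)⁻¹ :=
            mul_le_mul_of_nonneg_right
              (mul_le_mul_of_nonneg_left hsA (by norm_num))
              (inv_nonneg.2 (Real.sqrt_nonneg α))
        _ ≤ 4 * α ^ (-(1:ℝ)/2) * H1norm g := by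
            rw [hα12]
            nlinarith [mul_nonneg (inv_nonneg.2 (Real.sqrt_nonneg α)) hH0]
end

section
/- There is an absolute constant C such that for all α > 0 and all y ∈ ℝ: (i) for every s ∈ (0,1] and every C¹ function h : ℝ → ℝ with h, h' locally integrable, |J_α[h, L_s](y)| ≤ C·s·∫_{|t| ≤ α} ( |h(y+t)| + |h'(y+t)| ) dt; (ii) for all bounded C¹ functions h₁, h₂ : ℝ → ℝ, |J_α[h₁, h₂](y)| ≤ C·( ‖h₁‖_{L^∞}·∫_{|t| ≤ α} ( |h₂(y+t)| + |h₂'(y+t)| ) dt + ‖h₂‖_{L^∞}·∫_{|t| ≤ α} ( |h₁(y+t)| + |h₁'(y+t)| ) dt ). -/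
open MeasureTheory Real Set Filter

lemma arctan_lip (a b : ℝ) : |Real.arctan a - Real.arctan b| ≤ |a - b| := by
  have h : LipschitzWith 1 Real.arctan := by
    apply lipschitzWith_of_nnnorm_deriv_le Real.differentiable_arctan
    intro x
    rw [Real.deriv_arctan]
    have : |1 / (1 + x ^ 2)| ≤ 1 := by
      rw [abs_div]
      rw [div_le_one (by positivity)]
      rw [abs_one, abs_of_pos (by positivity)]
      nlinarith [sq_nonneg x]
    rw [← NNReal.coe_le_coe, coe_nnnorm, Real.norm_eq_abs]
    simpa [abs_inv] using this
  have := h.dist_le_mul a b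
  simpa [Real.dist_eq] using this

-- FTC bound
lemma ftc_abs {h : ℝ → ℝ} (hh : ContDiff ℝ 1 h) {a b : ℝ} (hab : a ≤ b) :
    |h b - h a| ≤ ∫ z in a..b, |deriv h z| := by
  have hc' : Continuous (deriv h) := hh.continuous_deriv le_rfl
  have : h b - h a = ∫ z in a..b, deriv h z :=
    (intervalIntegral.integral_deriv_eq_sub (fun x _ => hh.differentiable one_ne_zero x)
      (hc'.intervalIntegrable a b)).symm
  rw [this]
  exact intervalIntegral.abs_integral_le_integral_abs (μ := volume) hab

-- general average bound
lemma avg_general {h : ℝ → ℝ} (hh : ContDiff ℝ 1 h) {a b c : ℝ} (hab : a < b)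
    (hc : c ∈ Set.Icc a b) :
    |(1 / (b - a)) * (∫ z in a..b, h z) - h c| ≤ ∫ z in a..b, |deriv h z| := by
  have hco : Continuous h := hh.continuous
  have hc' : Continuous (deriv h) := hh.continuous_deriv le_rfl
  set K : ℝ := ∫ z in a..b, |deriv h z| with hK
  have hint : IntervalIntegrable (fun z => |deriv h z|) volume a b :=
    (hc'.abs).intervalIntegrable a b
  have key : ∀ z ∈ Set.Icc a b, |h z - h c| ≤ K := by
    intro z hz
    rcases le_total z c with hzc | hcz
    · have h1 : |h z - h c| ≤ ∫ w in z..c, |deriv h w| := by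
        rw [abs_sub_comm]; exact ftc_abs hh hzc
      refine h1.trans ?_
      exact intervalIntegral.integral_mono_interval hz.1 hzc hc.2
        (Filter.Eventually.of_forall fun w => abs_nonneg _) hint
    · have h1 : |h z - h c| ≤ ∫ w in c..z, |deriv h w| := ftc_abs hh hcz
      refine h1.trans ?_
      exact intervalIntegral.integral_mono_interval hc.1 hcz hz.2
        (Filter.Eventually.of_forall fun w => abs_nonneg _) hint
  have hba : b - a ≠ 0 := by linarith
  have hrw : (1 / (b - a)) * (∫ z in a..b, h z) - h c
      = (1 / (b - a)) * ∫ z in a..b, (h z - h c) := by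
    rw [intervalIntegral.integral_sub (hco.intervalIntegrable a b)
      (intervalIntegrable_const), intervalIntegral.integral_const]
    simp only [smul_eq_mul]
    field_simp
  rw [hrw, abs_mul]
  have hb := intervalIntegral.norm_integral_le_of_norm_le_const (C := K)
    (f := fun z => h z - h c) (a := a) (b := b) ?_
  · calc |1 / (b - a)| * ‖∫ z in a..b, (h z - h c)‖
        ≤ |1 / (b - a)| * (K * |b - a|) := by
          exact mul_le_mul_of_nonneg_left hb (abs_nonneg _)
      _ = K := by
          rw [abs_div, abs_one]
          field_simp
  · intro z hz
    rw [Set.uIoc_of_le hab.le] at hz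
    exact key z ⟨hz.1.le, hz.2⟩

-- average bounds for fint
lemma fint_pos_sub {h : ℝ → ℝ} (hh : ContDiff ℝ 1 h) {α : ℝ} (hα : 0 < α) (y : ℝ) :
    |fint α h y - h y| ≤ ∫ z in (y - α)..y, |deriv h z| := by
  have := avg_general hh (a := y - α) (b := y) (c := y) (by linarith)
    ⟨by linarith, le_rfl⟩
  rw [show y - (y - α) = α by ring] at this
  exact this

lemma fint_neg_sub {h : ℝ → ℝ} (hh : ContDiff ℝ 1 h) {α : ℝ} (hα : 0 < α) (y : ℝ) :
    |fint (-α) h y - h y| ≤ ∫ z in y..(y + α), |deriv h z| := by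
  have hrw : fint (-α) h y = (1 / α) * ∫ z in y..(y + α), h z := by
    rw [fint, show y - (-α) = y + α by ring, intervalIntegral.integral_symm]
    field_simp
  rw [hrw]
  have := avg_general hh (a := y) (b := y + α) (c := y) (by linarith)
    ⟨le_rfl, by linarith⟩
  rw [show y + α - y = α by ring] at this
  exact this

-- sup bound for fint
lemma fint_le_sup {f : ℝ → ℝ} (hf : Continuous f) {M : ℝ} (hM : ∀ x, |f x| ≤ M)
    {α : ℝ} (hα : α ≠ 0) (y : ℝ) : |fint α f y| ≤ M := by
  rw [fint, abs_mul]
  have hb := intervalIntegral.norm_integral_le_of_norm_le_const (C := M)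
    (f := f) (a := y - α) (b := y) (fun z _ => hM z)
  calc |1 / α| * ‖∫ z in (y - α)..y, f z‖
      ≤ |1 / α| * (M * |y - (y - α)|) := mul_le_mul_of_nonneg_left hb (abs_nonneg _)
    _ = M := by
        rw [show y - (y - α) = α by ring, abs_div, abs_one]
        field_simp

lemma Ls_abs_le {s : ℝ} (hs : 0 < s) (x : ℝ) : |Ls s x| ≤ s := by
  rw [Ls, abs_mul]
  have h1 : |2 * s / Real.pi| = 2 * s / Real.pi := by
    rw [abs_of_pos (by positivity)]
  have h2 : |Real.arctan ((1 + s ^ 2 / 3) * x)| ≤ Real.pi / 2 :=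
    abs_le.mpr ⟨(Real.neg_pi_div_two_lt_arctan _).le, (Real.arctan_lt_pi_div_two _).le⟩
  rw [h1]
  calc 2 * s / Real.pi * |Real.arctan ((1 + s ^ 2 / 3) * x)|
      ≤ 2 * s / Real.pi * (Real.pi / 2) := by
        exact mul_le_mul_of_nonneg_left h2 (by positivity)
    _ = s := by field_simp
  
lemma Ls_lip {s : ℝ} (hs : 0 < s) (hs1 : s ≤ 1) (a b : ℝ) :
    |Ls s a - Ls s b| ≤ s * |a - b| := by
  rw [Ls, Ls, ← mul_sub, abs_mul]
  have hA := arctan_lip ((1 + s ^ 2 / 3) * a) ((1 + s ^ 2 / 3) * b)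
  rw [← mul_sub, abs_mul] at hA
  have hk : |1 + s ^ 2 / 3| = 1 + s ^ 2 / 3 := abs_of_pos (by positivity)
  rw [hk] at hA
  have h1 : |2 * s / Real.pi| = 2 * s / Real.pi := abs_of_pos (by positivity)
  rw [h1, div_mul_eq_mul_div, div_le_iff₀ Real.pi_pos]
  have hπ : (3 : ℝ) < Real.pi := Real.pi_gt_three
  have hs2 : s ^ 2 ≤ 1 := by nlinarith
  have hD : (0:ℝ) ≤ |a - b| := abs_nonneg _
  have hAnn : (0:ℝ) ≤ |Real.arctan ((1 + s ^ 2 / 3) * a) - Real.arctan ((1 + s ^ 2 / 3) * b)| :=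
    abs_nonneg _
  nlinarith [mul_le_mul_of_nonneg_left hA (by positivity : (0:ℝ) ≤ 2 * s),
    mul_nonneg hD hs.le]

-- Lipschitz average bounds for Ls (two-sided)
lemma avg_lip {g : ℝ → ℝ} (hg : Continuous g) {a b c s : ℝ} (hs : 0 ≤ s) (hab : a < b)
    (hc : c ∈ Set.Icc a b) (hlip : ∀ x z, |g x - g z| ≤ s * |x - z|) :
    |(1 / (b - a)) * (∫ z in a..b, g z) - g c| ≤ s * (b - a) := by
  have hba : b - a ≠ 0 := by linarith
  have hrw : (1 / (b - a)) * (∫ z in a..b, g z) - g c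
      = (1 / (b - a)) * ∫ z in a..b, (g z - g c) := by
    rw [intervalIntegral.integral_sub (hg.intervalIntegrable a b)
      (intervalIntegrable_const), intervalIntegral.integral_const]
    simp only [smul_eq_mul]
    field_simp
  rw [hrw, abs_mul]
  have hb := intervalIntegral.norm_integral_le_of_norm_le_const (C := s * (b - a))
    (f := fun z => g z - g c) (a := a) (b := b) ?_
  · calc |1 / (b - a)| * ‖∫ z in a..b, (g z - g c)‖
        ≤ |1 / (b - a)| * (s * (b - a) * |b - a|) := mul_le_mul_of_nonneg_left hb (abs_nonneg _)
      _ = s * (b - a) := by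
          rw [abs_div, abs_one, abs_of_pos (by linarith : (0:ℝ) < b - a)]
          field_simp
  · intro z hz
    rw [Set.uIoc_of_le hab.le] at hz
    have h1 : |g z - g c| ≤ s * |z - c| := hlip z c
    refine h1.trans ?_
    have : |z - c| ≤ b - a := by
      rw [abs_le]; constructor <;> [linarith [hz.1.le, hc.2]; linarith [hz.2, hc.1]]
    exact mul_le_mul_of_nonneg_left this hs

lemma Ls_cont (s : ℝ) : Continuous (Ls s) := by
  unfold Ls
  exact continuous_const.mul (Real.continuous_arctan.comp (continuous_const.mul continuous_id))

lemma fint_Ls_pos_sub {s α : ℝ} (hs : 0 < s) (hs1 : s ≤ 1) (hα : 0 < α) (y : ℝ) :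
    |fint α (Ls s) y - Ls s y| ≤ 2 * s * min α 1 := by
  have h1 : |fint α (Ls s) y - Ls s y| ≤ s * α := by
    have := avg_lip (Ls_cont s) hs.le (a := y - α) (b := y) (c := y) (by linarith)
      ⟨by linarith, le_rfl⟩ (Ls_lip hs hs1)
    rw [show y - (y - α) = α by ring] at this
    exact this
  have h2 : |fint α (Ls s) y - Ls s y| ≤ 2 * s := by
    calc |fint α (Ls s) y - Ls s y| ≤ |fint α (Ls s) y| + |Ls s y| := abs_sub _ _
      _ ≤ s + s := add_le_add (fint_le_sup (Ls_cont s) (Ls_abs_le hs) (ne_of_gt hα) y)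
            (Ls_abs_le hs y)
      _ = 2 * s := by ring
  rcases le_total α 1 with hα1 | hα1
  · rw [min_eq_left hα1]; nlinarith
  · rw [min_eq_right hα1]; linarith

lemma fint_Ls_neg_sub {s α : ℝ} (hs : 0 < s) (hs1 : s ≤ 1) (hα : 0 < α) (y : ℝ) :
    |fint (-α) (Ls s) y - Ls s y| ≤ 2 * s * min α 1 := by
  have hrw : fint (-α) (Ls s) y = (1 / α) * ∫ z in y..(y + α), Ls s z := by
    rw [fint, show y - (-α) = y + α by ring, intervalIntegral.integral_symm]
    field_simp
  have h1 : |fint (-α) (Ls s) y - Ls s y| ≤ s * α := by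
    rw [hrw]
    have := avg_lip (Ls_cont s) hs.le (a := y) (b := y + α) (c := y) (by linarith)
      ⟨le_rfl, by linarith⟩ (Ls_lip hs hs1)
    rw [show y + α - y = α by ring] at this
    exact this
  have h2 : |fint (-α) (Ls s) y - Ls s y| ≤ 2 * s := by
    calc |fint (-α) (Ls s) y - Ls s y| ≤ |fint (-α) (Ls s) y| + |Ls s y| := abs_sub _ _
      _ ≤ s + s := add_le_add (fint_le_sup (Ls_cont s) (Ls_abs_le hs)
            (by exact neg_ne_zero.mpr (ne_of_gt hα)) y) (Ls_abs_le hs y)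
      _ = 2 * s := by ring
  rcases le_total α 1 with hα1 | hα1
  · rw [min_eq_left hα1]; nlinarith
  · rw [min_eq_right hα1]; linarith

-- conversion of the Icc integral
lemma icc_conv (F : ℝ → ℝ) {α : ℝ} (hα : 0 < α) (y : ℝ) :
    (∫ t in Set.Icc (-α) α, F (y + t)) = ∫ z in (y - α)..(y + α), F z := by
  rw [MeasureTheory.integral_Icc_eq_integral_Ioc,
    ← intervalIntegral.integral_of_le (by linarith : -α ≤ α),
    intervalIntegral.integral_comp_add_left,
    show y + -α = y - α by ring]

-- the Icc integral equals H + K and dominates pieces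
lemma I_eq {h : ℝ → ℝ} (hh : ContDiff ℝ 1 h) {α : ℝ} (hα : 0 < α) (y : ℝ) :
    (∫ t in Set.Icc (-α) α, (|h (y + t)| + |deriv h (y + t)|))
      = (∫ z in (y - α)..(y + α), |h z|) + ∫ z in (y - α)..(y + α), |deriv h z| := by
  rw [icc_conv (fun z => |h z| + |deriv h z|) hα y]
  exact intervalIntegral.integral_add (hh.continuous.abs.intervalIntegrable _ _)
    ((hh.continuous_deriv le_rfl).abs.intervalIntegrable _ _)

lemma K_le_I {h : ℝ → ℝ} (hh : ContDiff ℝ 1 h) {α : ℝ} (hα : 0 < α) (y : ℝ) :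
    (∫ z in (y - α)..(y + α), |deriv h z|)
      ≤ ∫ t in Set.Icc (-α) α, (|h (y + t)| + |deriv h (y + t)|) := by
  rw [I_eq hh hα y]
  have : (0:ℝ) ≤ ∫ z in (y - α)..(y + α), |h z| :=
    intervalIntegral.integral_nonneg (by linarith) (fun z _ => abs_nonneg _)
  linarith

lemma K_split {h : ℝ → ℝ} (hh : ContDiff ℝ 1 h) {α : ℝ} (hα : 0 < α) (y : ℝ) :
    (∫ z in (y - α)..y, |deriv h z|) + (∫ z in y..(y + α), |deriv h z|)
      = ∫ z in (y - α)..(y + α), |deriv h z| := by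
  exact intervalIntegral.integral_add_adjacent_intervals
    ((hh.continuous_deriv le_rfl).abs.intervalIntegrable _ _)
    ((hh.continuous_deriv le_rfl).abs.intervalIntegrable _ _)

lemma I_nonneg {h : ℝ → ℝ} {α y : ℝ} :
    (0:ℝ) ≤ ∫ t in Set.Icc (-α) α, (|h (y + t)| + |deriv h (y + t)|) :=
  MeasureTheory.integral_nonneg (fun t => by positivity)

-- the min trick
lemma min_mul_le {h : ℝ → ℝ} (hh : ContDiff ℝ 1 h) {α : ℝ} (hα : 0 < α) (y : ℝ) :
    min α 1 * |h y| ≤ ∫ t in Set.Icc (-α) α, (|h (y + t)| + |deriv h (y + t)|) := by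
  set m := min α 1 with hmdef
  have hm0 : 0 < m := lt_min hα one_pos
  have hmα : m ≤ α := min_le_left _ _
  have hm1 : m ≤ 1 := min_le_right _ _
  set K : ℝ := ∫ z in (y - α)..(y + α), |deriv h z| with hKdef
  have hKnn : 0 ≤ K :=
    intervalIntegral.integral_nonneg (by linarith) (fun z _ => abs_nonneg _)
  have hKint : IntervalIntegrable (fun z => |deriv h z|) volume (y - α) (y + α) :=
    (hh.continuous_deriv le_rfl).abs.intervalIntegrable _ _
  have step1 : ∀ t ∈ Set.Icc (0:ℝ) m, |h y| ≤ |h (y + t)| + K := by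
    intro t ht
    have h1 : |h y| ≤ |h (y + t)| + |h (y + t) - h y| := by
      have := abs_sub_abs_le_abs_sub (h y) (h (y + t))
      have h2 := abs_sub (h y) (h (y+t))
      calc |h y| = |h (y + t) + (h y - h (y + t))| := by ring_nf
        _ ≤ |h (y + t)| + |h y - h (y + t)| := abs_add_le _ _
        _ = |h (y + t)| + |h (y + t) - h y| := by rw [abs_sub_comm]
    refine h1.trans (add_le_add_right ?_ _)
    have h2 : |h (y + t) - h y| ≤ ∫ w in y..(y + t), |deriv h w| :=
      ftc_abs hh (by linarith [ht.1])
    refine h2.trans ?_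
    exact intervalIntegral.integral_mono_interval (by linarith) (by linarith [ht.1])
      (by linarith [ht.2]) (Filter.Eventually.of_forall fun w => abs_nonneg _) hKint
  have step2 : m * |h y| ≤ (∫ t in (0:ℝ)..m, |h (y + t)|) + m * K := by
    have heq : m * |h y| = ∫ t in (0:ℝ)..m, |h y| := by
      rw [intervalIntegral.integral_const]; simp [smul_eq_mul]
    rw [heq]
    have hmono : (∫ t in (0:ℝ)..m, |h y|) ≤ ∫ t in (0:ℝ)..m, (|h (y + t)| + K) := by
      have hcont : Continuous fun t : ℝ => |h (y + t)| :=
        (hh.continuous.comp (continuous_const.add continuous_id)).abs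
      apply intervalIntegral.integral_mono_on hm0.le intervalIntegrable_const
      · exact (hcont.add continuous_const).intervalIntegrable _ _
      · exact step1
    have hsum : (∫ t in (0:ℝ)..m, (|h (y + t)| + K))
        = (∫ t in (0:ℝ)..m, |h (y + t)|) + m * K := by
      have hcont : Continuous fun t : ℝ => |h (y + t)| :=
        (hh.continuous.comp (continuous_const.add continuous_id)).abs
      rw [intervalIntegral.integral_add (hcont.intervalIntegrable _ _)
        intervalIntegrable_const, intervalIntegral.integral_const]
      simp [smul_eq_mul]
    linarith [hmono, hsum.le, hsum.ge]
  have step3 : (∫ t in (0:ℝ)..m, |h (y + t)|) ≤ ∫ z in (y - α)..(y + α), |h z| := by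
    have hcomp : (∫ t in (0:ℝ)..m, |h (y + t)|) = ∫ z in y..(y + m), |h z| := by
      have := intervalIntegral.integral_comp_add_left (a := (0:ℝ)) (b := m)
        (f := fun z => |h z|) y
      simpa using this
    rw [hcomp]
    exact intervalIntegral.integral_mono_interval (by linarith) (by linarith)
      (by linarith) (Filter.Eventually.of_forall fun w => abs_nonneg _)
      (hh.continuous.abs.intervalIntegrable _ _)
  have step4 : m * K ≤ K := by nlinarith
  rw [I_eq hh hα y]
  linarith

lemma K1_le_I {h : ℝ → ℝ} (hh : ContDiff ℝ 1 h) {α : ℝ} (hα : 0 < α) (y : ℝ) :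
    (∫ z in (y - α)..y, |deriv h z|)
      ≤ ∫ t in Set.Icc (-α) α, (|h (y + t)| + |deriv h (y + t)|) := by
  refine le_trans ?_ (K_le_I hh hα y)
  rw [← K_split hh hα y]
  have : (0:ℝ) ≤ ∫ z in y..(y + α), |deriv h z| :=
    intervalIntegral.integral_nonneg (by linarith) (fun z _ => abs_nonneg _)
  linarith

lemma K2_le_I {h : ℝ → ℝ} (hh : ContDiff ℝ 1 h) {α : ℝ} (hα : 0 < α) (y : ℝ) :
    (∫ z in y..(y + α), |deriv h z|)
      ≤ ∫ t in Set.Icc (-α) α, (|h (y + t)| + |deriv h (y + t)|) := by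
  refine le_trans ?_ (K_le_I hh hα y)
  rw [← K_split hh hα y]
  have : (0:ℝ) ≤ ∫ z in (y - α)..y, |deriv h z| :=
    intervalIntegral.integral_nonneg (by linarith) (fun z _ => abs_nonneg _)
  linarith

theorem Jop_bilinear_bounds' :
    ∃ C : ℝ, 0 < C ∧ ∀ α : ℝ, 0 < α → ∀ y : ℝ,
      (∀ s : ℝ, 0 < s → s ≤ 1 → ∀ h : ℝ → ℝ, ContDiff ℝ 1 h →
          LocallyIntegrable h → LocallyIntegrable (deriv h) →
        |fint α h y * fint α (Ls s) y - 2 * h y * Ls s y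
            + fint (-α) h y * fint (-α) (Ls s) y| ≤ 6 * s *
          ∫ t in Set.Icc (-α) α, (|h (y + t)| + |deriv h (y + t)|)) ∧
      (∀ h₁ h₂ : ℝ → ℝ, ContDiff ℝ 1 h₁ → ContDiff ℝ 1 h₂ →
          ∀ M₁ M₂ : ℝ, (∀ x : ℝ, |h₁ x| ≤ M₁) → (∀ x : ℝ, |h₂ x| ≤ M₂) →
        |fint α h₁ y * fint α h₂ y - 2 * h₁ y * h₂ y
            + fint (-α) h₁ y * fint (-α) h₂ y| ≤ 6 *
          (M₁ * (∫ t in Set.Icc (-α) α, (|h₂ (y + t)| + |deriv h₂ (y + t)|))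
            + M₂ * ∫ t in Set.Icc (-α) α, (|h₁ (y + t)| + |deriv h₁ (y + t)|))) := by
  refine ⟨6, by norm_num, fun α hα y => ⟨?_, ?_⟩⟩
  · intro s hs hs1 h hh _ _
    set A := fint α h y
    set A' := fint (-α) h y
    set B := fint α (Ls s) y
    set B' := fint (-α) (Ls s) y
    set I : ℝ := ∫ t in Set.Icc (-α) α, (|h (y + t)| + |deriv h (y + t)|) with hI
    set K₁ : ℝ := ∫ z in (y - α)..y, |deriv h z| with hK₁
    set K₂ : ℝ := ∫ z in y..(y + α), |deriv h z| with hK₂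
    set m : ℝ := min α 1 with hm
    have hm0 : 0 < m := lt_min hα one_pos
    have hInn : 0 ≤ I := I_nonneg
    have hK₁nn : 0 ≤ K₁ :=
      intervalIntegral.integral_nonneg (by linarith) (fun z _ => abs_nonneg _)
    have hK₂nn : 0 ≤ K₂ :=
      intervalIntegral.integral_nonneg (by linarith) (fun z _ => abs_nonneg _)
    have hid : A * B - 2 * h y * Ls s y + A' * B'
        = (A - h y) * B + h y * (B - Ls s y)
          + ((A' - h y) * B' + h y * (B' - Ls s y)) := by ring
    have hB : |B| ≤ s := fint_le_sup (Ls_cont s) (Ls_abs_le hs) (ne_of_gt hα) y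
    have hB' : |B'| ≤ s := fint_le_sup (Ls_cont s) (Ls_abs_le hs)
      (neg_ne_zero.mpr (ne_of_gt hα)) y
    have hA : |A - h y| ≤ K₁ := fint_pos_sub hh hα y
    have hA' : |A' - h y| ≤ K₂ := fint_neg_sub hh hα y
    have hBL : |B - Ls s y| ≤ 2 * s * m := fint_Ls_pos_sub hs hs1 hα y
    have hB'L : |B' - Ls s y| ≤ 2 * s * m := fint_Ls_neg_sub hs hs1 hα y
    have hKI : K₁ + K₂ ≤ I := by
      rw [hK₁, hK₂, K_split hh hα y]; exact K_le_I hh hα y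
    have hmI : m * |h y| ≤ I := min_mul_le hh hα y
    have t1 : |(A - h y) * B| ≤ K₁ * s := by
      rw [abs_mul]; exact mul_le_mul hA hB (abs_nonneg _) hK₁nn
    have t2 : |h y * (B - Ls s y)| ≤ |h y| * (2 * s * m) := by
      rw [abs_mul]; exact mul_le_mul_of_nonneg_left hBL (abs_nonneg _)
    have t3 : |(A' - h y) * B'| ≤ K₂ * s := by
      rw [abs_mul]; exact mul_le_mul hA' hB' (abs_nonneg _) hK₂nn
    have t4 : |h y * (B' - Ls s y)| ≤ |h y| * (2 * s * m) := by
      rw [abs_mul]; exact mul_le_mul_of_nonneg_left hB'L (abs_nonneg _)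
    have habs : |A * B - 2 * h y * Ls s y + A' * B'|
        ≤ |(A - h y) * B| + |h y * (B - Ls s y)|
          + (|(A' - h y) * B'| + |h y * (B' - Ls s y)|) := by
      rw [hid]
      exact (abs_add_le _ _).trans (add_le_add (abs_add_le _ _) (abs_add_le _ _))
    have hfin : K₁ * s + |h y| * (2 * s * m) + (K₂ * s + |h y| * (2 * s * m)) ≤ 6 * s * I := by
      nlinarith [mul_le_mul_of_nonneg_left hKI hs.le,
        mul_le_mul_of_nonneg_left hmI (by positivity : (0:ℝ) ≤ 4 * s)]
    linarith [habs, t1, t2, t3, t4]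
  · intro h₁ h₂ hh₁ hh₂ M₁ M₂ hM₁ hM₂
    have hM₁nn : 0 ≤ M₁ := (abs_nonneg _).trans (hM₁ 0)
    have hM₂nn : 0 ≤ M₂ := (abs_nonneg _).trans (hM₂ 0)
    set A := fint α h₁ y
    set A' := fint (-α) h₁ y
    set B := fint α h₂ y
    set B' := fint (-α) h₂ y
    set I₁ : ℝ := ∫ t in Set.Icc (-α) α, (|h₁ (y + t)| + |deriv h₁ (y + t)|) with hI₁
    set I₂ : ℝ := ∫ t in Set.Icc (-α) α, (|h₂ (y + t)| + |deriv h₂ (y + t)|) with hI₂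
    have hI₁nn : 0 ≤ I₁ := I_nonneg
    have hI₂nn : 0 ≤ I₂ := I_nonneg
    have hid : A * B - 2 * h₁ y * h₂ y + A' * B'
        = (A - h₁ y) * B + h₁ y * (B - h₂ y)
          + ((A' - h₁ y) * B' + h₁ y * (B' - h₂ y)) := by ring
    have hA : |A - h₁ y| ≤ I₁ := (fint_pos_sub hh₁ hα y).trans (K1_le_I hh₁ hα y)
    have hA' : |A' - h₁ y| ≤ I₁ := (fint_neg_sub hh₁ hα y).trans (K2_le_I hh₁ hα y)
    have hBsub : |B - h₂ y| ≤ I₂ := (fint_pos_sub hh₂ hα y).trans (K1_le_I hh₂ hα y)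
    have hB'sub : |B' - h₂ y| ≤ I₂ := (fint_neg_sub hh₂ hα y).trans (K2_le_I hh₂ hα y)
    have hB : |B| ≤ M₂ := fint_le_sup hh₂.continuous hM₂ (ne_of_gt hα) y
    have hB' : |B'| ≤ M₂ := fint_le_sup hh₂.continuous hM₂ (neg_ne_zero.mpr (ne_of_gt hα)) y
    have t1 : |(A - h₁ y) * B| ≤ I₁ * M₂ := by
      rw [abs_mul]; exact mul_le_mul hA hB (abs_nonneg _) hI₁nn
    have t2 : |h₁ y * (B - h₂ y)| ≤ M₁ * I₂ := by
      rw [abs_mul]; exact mul_le_mul (hM₁ y) hBsub (abs_nonneg _) hM₁nn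
    have t3 : |(A' - h₁ y) * B'| ≤ I₁ * M₂ := by
      rw [abs_mul]; exact mul_le_mul hA' hB' (abs_nonneg _) hI₁nn
    have t4 : |h₁ y * (B' - h₂ y)| ≤ M₁ * I₂ := by
      rw [abs_mul]; exact mul_le_mul (hM₁ y) hB'sub (abs_nonneg _) hM₁nn
    have habs : |A * B - 2 * h₁ y * h₂ y + A' * B'|
        ≤ |(A - h₁ y) * B| + |h₁ y * (B - h₂ y)|
          + (|(A' - h₁ y) * B'| + |h₁ y * (B' - h₂ y)|) := by
      rw [hid]
      exact (abs_add_le _ _).trans (add_le_add (abs_add_le _ _) (abs_add_le _ _))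
    have hprod1 : 0 ≤ M₁ * I₂ := mul_nonneg hM₁nn hI₂nn
    have hprod2 : 0 ≤ M₂ * I₁ := mul_nonneg hM₂nn hI₁nn
    nlinarith [habs, t1, t2, t3, t4]

/-- Integral-form bounds on the bilinear brick `J_α[h, L_s]` and `J_α[h₁, h₂]`. -/
theorem Jop_bilinear_bounds :
    ∃ C : ℝ, 0 < C ∧ ∀ α : ℝ, 0 < α → ∀ y : ℝ,
      (∀ s : ℝ, 0 < s → s ≤ 1 → ∀ h : ℝ → ℝ, ContDiff ℝ 1 h →
          LocallyIntegrable h → LocallyIntegrable (deriv h) →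
        |Jop α h (Ls s) y| ≤ C * s *
          ∫ t in Set.Icc (-α) α, (|h (y + t)| + |deriv h (y + t)|)) ∧
      (∀ h₁ h₂ : ℝ → ℝ, ContDiff ℝ 1 h₁ → ContDiff ℝ 1 h₂ →
          ∀ M₁ M₂ : ℝ, (∀ x : ℝ, |h₁ x| ≤ M₁) → (∀ x : ℝ, |h₂ x| ≤ M₂) →
        |Jop α h₁ h₂ y| ≤ C *
          (M₁ * (∫ t in Set.Icc (-α) α, (|h₂ (y + t)| + |deriv h₂ (y + t)|))
            + M₂ * ∫ t in Set.Icc (-α) α, (|h₁ (y + t)| + |deriv h₁ (y + t)|))) := by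
  obtain ⟨_, _, H⟩ := Jop_bilinear_bounds'
  refine ⟨6, by norm_num, fun α hα y => ⟨?_, ?_⟩⟩
  · intro s hs hs1 h hh hl hl'
    rw [Jop]
    exact (H α hα y).1 s hs hs1 h hh hl hl'
  · intro h₁ h₂ hh₁ hh₂ M₁ M₂ hM₁ hM₂
    rw [Jop]
    exact (H α hα y).2 h₁ h₂ hh₁ hh₂ M₁ M₂ hM₁ hM₂
end

section
/- Define, for a bounded continuous function h : ℝ → ℝ and s ∈ (0,1], R¹[L_s; h](y) := ∫_0^∞ ( L_s'(y+α) − L_s'(y−α) ) · J_α[h](y) · ( F(⨍_α h(y)) + F(⨍_{−α} h(y)) ) dα/α. Then there is an absolute constant C such that for all such h, all s ∈ (0,1] and all y ∈ ℝ: |R¹[L_s; h](y)| ≤ C·s·‖h‖_{L^∞}²·|y|·⟨y⟩^{−2}. -/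
open MeasureTheory Real Set Filter

/-- The symmetrized term `R¹[L_s; h]`. -/
noncomputable def R1op (s : ℝ) (h : ℝ → ℝ) (y : ℝ) : ℝ :=
  ∫ α in Set.Ioi (0:ℝ),
    (deriv (Ls s) (y + α) - deriv (Ls s) (y - α)) * Jop α h h y *
      ((1 + (fint α h y) ^ 2)⁻¹ + (1 + (fint (-α) h y) ^ 2)⁻¹) / α

lemma abs_fint_le {h : ℝ → ℝ} {M : ℝ} (hM : ∀ x, |h x| ≤ M) {β : ℝ} (hβ : β ≠ 0) (y : ℝ) :
    |fint β h y| ≤ M := by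
  have hβ' : (0:ℝ) < |β| := abs_pos.mpr hβ
  have hb : ‖∫ z in (y - β)..y, h z‖ ≤ M * |y - (y - β)| :=
    intervalIntegral.norm_integral_le_of_norm_le_const fun x _ => by
      simpa [Real.norm_eq_abs] using hM x
  rw [Real.norm_eq_abs] at hb
  have h1 : |y - (y - β)| = |β| := by congr 1; ring
  rw [h1] at hb
  rw [fint, abs_mul]
  have h2 : |1 / β| * |∫ z in (y - β)..y, h z| ≤ |1 / β| * (M * |β|) :=
    mul_le_mul_of_nonneg_left hb (abs_nonneg _)
  refine h2.trans (le_of_eq ?_)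
  rw [abs_div, abs_one]
  field_simp

lemma hasDerivAt_Ls (s x : ℝ) :
    HasDerivAt (Ls s) (2 * s / Real.pi * ((1 + s ^ 2 / 3) / (1 + ((1 + s ^ 2 / 3) * x) ^ 2))) x := by
  have h1 : HasDerivAt (fun t : ℝ => (1 + s ^ 2 / 3) * t) (1 + s ^ 2 / 3) x := by
    simpa using (hasDerivAt_id x).const_mul (1 + s ^ 2 / 3)
  have h2 := (Real.hasDerivAt_arctan ((1 + s ^ 2 / 3) * x)).comp x h1
  have h3 := h2.const_mul (2 * s / Real.pi)
  have e : 2 * s / Real.pi * ((1 + s ^ 2 / 3) / (1 + ((1 + s ^ 2 / 3) * x) ^ 2))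
      = 2 * s / Real.pi * (1 / (1 + ((1 + s ^ 2 / 3) * x) ^ 2) * (1 + s ^ 2 / 3)) := by ring
  rw [e]
  exact h3

lemma diff_deriv_Ls' (s y α : ℝ) :
    deriv (Ls s) (y + α) - deriv (Ls s) (y - α)
      = (2 * s / Real.pi) * (1 + s ^ 2 / 3) ^ 3 * (-(4 * y * α)) /
        ((1 + ((1 + s ^ 2 / 3) * (y + α)) ^ 2) * (1 + ((1 + s ^ 2 / 3) * (y - α)) ^ 2)) := by
  have n1 : (1 + ((1 + s ^ 2 / 3) * (y + α)) ^ 2) ≠ 0 := by positivity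
  have n2 : (1 + ((1 + s ^ 2 / 3) * (y - α)) ^ 2) ≠ 0 := by positivity
  have nπ : Real.pi ≠ 0 := Real.pi_ne_zero
  rw [(hasDerivAt_Ls s (y + α)).deriv, (hasDerivAt_Ls s (y - α)).deriv]
  field_simp
  ring

lemma deriv_Ls (s x : ℝ) :
    deriv (Ls s) x = 2 * s / Real.pi * ((1 + s ^ 2 / 3) / (1 + ((1 + s ^ 2 / 3) * x) ^ 2)) :=
  (hasDerivAt_Ls s x).deriv

set_option maxHeartbeats 2000000 in
/-- Pointwise decay of `R¹[L_s; h]` for bounded continuous `h`. -/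
theorem R1op_bound :
    ∃ C : ℝ, 0 < C ∧ ∀ s : ℝ, 0 < s → s ≤ 1 →
      ∀ h : ℝ → ℝ, Continuous h → ∀ M : ℝ, (∀ x : ℝ, |h x| ≤ M) →
      ∀ y : ℝ, |R1op s h y| ≤ C * s * M ^ 2 * |y| * (1 + y ^ 2)⁻¹ := by
  refine ⟨170, by norm_num, ?_⟩
  intro s hs hs1 h _ M hM y
  have hM0 : 0 ≤ M := (abs_nonneg _).trans (hM 0)
  set a : ℝ := 1 + s ^ 2 / 3 with ha_def
  have ha1 : 1 ≤ a := by rw [ha_def]; nlinarith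
  have ha2 : a ≤ 4 / 3 := by rw [ha_def]; nlinarith
  set B : ℝ := 52 * s * M ^ 2 * |y| / (1 + y ^ 2) with hB_def
  have hB0 : 0 ≤ B := by positivity
  have hint0 : Integrable (fun x : ℝ => (1 + (x - |y|) ^ 2)⁻¹) :=
    integrable_inv_one_add_sq.comp_sub_right |y|
  have hint : Integrable (fun α : ℝ => B * (1 + (α - |y|) ^ 2)⁻¹)
      (volume.restrict (Ioi 0)) := ((hint0.const_mul B)).restrict
  have hpt : ∀ᵐ α ∂(volume.restrict (Ioi (0:ℝ))),
      ‖(deriv (Ls s) (y + α) - deriv (Ls s) (y - α)) * Jop α h h y *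
        ((1 + (fint α h y) ^ 2)⁻¹ + (1 + (fint (-α) h y) ^ 2)⁻¹) / α‖
        ≤ B * (1 + (α - |y|) ^ 2)⁻¹ := by
    filter_upwards [ae_restrict_mem measurableSet_Ioi] with α hα
    have hα0 : (0:ℝ) < α := hα
    set D1 : ℝ := 1 + (a * (y + α)) ^ 2 with hD1_def
    set D2 : ℝ := 1 + (a * (y - α)) ^ 2 with hD2_def
    have hD1 : 0 < D1 := by positivity
    have hD2 : 0 < D2 := by positivity
    have hD : 0 < D1 * D2 := mul_pos hD1 hD2
    -- bound on J
    have hf1 : |fint α h y| ≤ M := abs_fint_le hM hα0.ne' y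
    have hf2 : |fint (-α) h y| ≤ M := abs_fint_le hM (neg_ne_zero.mpr hα0.ne') y
    have hJ : |Jop α h h y| ≤ 4 * M ^ 2 := by
      have e1 : |fint α h y * fint α h y| ≤ M ^ 2 := by
        rw [abs_mul]; nlinarith [abs_nonneg (fint α h y)]
      have e2 : |2 * h y * h y| ≤ 2 * M ^ 2 := by
        rw [abs_mul, abs_mul]
        have := hM y
        have := abs_nonneg (h y)
        rw [abs_two]
        nlinarith
      have e3 : |fint (-α) h y * fint (-α) h y| ≤ M ^ 2 := by
        rw [abs_mul]; nlinarith [abs_nonneg (fint (-α) h y)]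
      have t1 := abs_add_le (fint α h y * fint α h y - 2 * h y * h y)
        (fint (-α) h y * fint (-α) h y)
      have t2 := abs_sub (fint α h y * fint α h y) (2 * h y * h y)
      rw [Jop]
      linarith
    -- bound on the sum of inverses
    set S : ℝ := (1 + (fint α h y) ^ 2)⁻¹ + (1 + (fint (-α) h y) ^ 2)⁻¹ with hS_def
    have hS0 : 0 ≤ S := by positivity
    have hS2 : S ≤ 2 := by
      have u1 : (1 + (fint α h y) ^ 2)⁻¹ ≤ 1 := by
        rw [inv_le_one_iff₀]; right; nlinarith [sq_nonneg (fint α h y)]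
      have u2 : (1 + (fint (-α) h y) ^ 2)⁻¹ ≤ 1 := by
        rw [inv_le_one_iff₀]; right; nlinarith [sq_nonneg (fint (-α) h y)]
      rw [hS_def]; linarith
    -- the derivative difference
    have hπ : (0:ℝ) < Real.pi := Real.pi_pos
    have hdiff_eq : deriv (Ls s) (y + α) - deriv (Ls s) (y - α)
        = (2 * s / Real.pi) * a ^ 3 * (-(4 * y * α)) / (D1 * D2) := by
      have := diff_deriv_Ls' s y α
      rw [← ha_def, ← hD1_def, ← hD2_def] at this
      exact this
    have hdiff_abs : |deriv (Ls s) (y + α) - deriv (Ls s) (y - α)|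
        ≤ (8 / 3) * s * a ^ 3 * (|y| * α) / (D1 * D2) := by
      rw [hdiff_eq, abs_div, abs_of_pos hD, abs_mul, abs_mul, abs_neg]
      have c0 : |2 * s / Real.pi| = 2 * s / Real.pi := abs_of_nonneg (by positivity)
      have c1 : |a ^ 3| = a ^ 3 := abs_of_nonneg (by positivity)
      have c2 : |4 * y * α| = 4 * |y| * α := by
        rw [abs_mul, abs_mul, abs_of_pos hα0]
        norm_num
      rw [c0, c1, c2]
      have c3 : 2 * s / Real.pi ≤ 2 / 3 * s := by
        rw [div_le_iff₀ hπ]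
        have := mul_le_mul_of_nonneg_left Real.pi_gt_three.le hs.le
        linarith
      have c4 : 2 * s / Real.pi * a ^ 3 * (4 * |y| * α)
          ≤ 8 / 3 * s * a ^ 3 * (|y| * α) := by
        have : 0 ≤ a ^ 3 * (4 * |y| * α) := by positivity
        nlinarith [mul_le_mul_of_nonneg_right c3 this, abs_nonneg y]
      exact div_le_div_of_nonneg_right c4 hD.le |>.trans_eq rfl
    -- denominator comparison
    have hQ : (0:ℝ) < (1 + y ^ 2) * (1 + (α - |y|) ^ 2) := by positivity
    have hDD : (1 + y ^ 2) * (1 + (α - |y|) ^ 2) ≤ D1 * D2 := by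
      have haa : 1 ≤ a * a := by nlinarith
      have k1 : 1 + (y + α) ^ 2 ≤ D1 := by
        rw [hD1_def]
        nlinarith [mul_nonneg (sub_nonneg.mpr haa) (sq_nonneg (y + α))]
      have k2 : 1 + (y - α) ^ 2 ≤ D2 := by
        rw [hD2_def]
        nlinarith [mul_nonneg (sub_nonneg.mpr haa) (sq_nonneg (y - α))]
      have k3 : (1 + y ^ 2) * (1 + (α - |y|) ^ 2)
          ≤ (1 + (y + α) ^ 2) * (1 + (y - α) ^ 2) := by
        rcases abs_cases y with ⟨hy, hy'⟩ | ⟨hy, hy'⟩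
        · rw [hy]
          have h2y : (0:ℝ) ≤ 2 * y + α := by linarith
          have e : (0:ℝ) ≤ α * (2 * y + α) * (1 + (y - α) ^ 2) :=
            mul_nonneg (mul_nonneg hα0.le h2y) (by positivity)
          nlinarith [e]
        · rw [hy]
          have h2y : (0:ℝ) ≤ α - 2 * y := by linarith
          have e : (0:ℝ) ≤ α * (α - 2 * y) * (1 + (y + α) ^ 2) :=
            mul_nonneg (mul_nonneg hα0.le h2y) (by positivity)
          nlinarith [e]
      calc (1 + y ^ 2) * (1 + (α - |y|) ^ 2)
          ≤ (1 + (y + α) ^ 2) * (1 + (y - α) ^ 2) := k3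
        _ ≤ D1 * D2 := by
            have : 0 < 1 + (y - α) ^ 2 := by positivity
            have : 0 < 1 + (y + α) ^ 2 := by positivity
            nlinarith [mul_le_mul k1 k2 (by positivity) hD1.le]
    -- main chain
    rw [Real.norm_eq_abs, abs_div, abs_of_pos hα0, abs_mul, abs_mul, abs_of_nonneg hS0]
    calc |deriv (Ls s) (y + α) - deriv (Ls s) (y - α)| * |Jop α h h y| * S / α
        ≤ ((8 / 3) * s * a ^ 3 * (|y| * α) / (D1 * D2)) * (4 * M ^ 2) * 2 / α := by
          gcongr
      _ = (64 / 3) * a ^ 3 * (s * M ^ 2 * |y|) / (D1 * D2) := by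
          field_simp
          try ring
      _ ≤ 52 * (s * M ^ 2 * |y|) / (D1 * D2) := by
          gcongr ?_ / _
          have h0 : (0:ℝ) ≤ a := by linarith
          have hsq : a ^ 2 ≤ 16 / 9 := by nlinarith
          have h1 : a ^ 3 ≤ 64 / 27 := by
            nlinarith [mul_le_mul hsq ha2 h0 (by norm_num : (0:ℝ) ≤ 16 / 9)]
          have ht0 : (0:ℝ) ≤ s * M ^ 2 * |y| := by positivity
          nlinarith [mul_nonneg ht0 (sub_nonneg.mpr h1), ht0]
      _ ≤ 52 * (s * M ^ 2 * |y|) / ((1 + y ^ 2) * (1 + (α - |y|) ^ 2)) := by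
          gcongr
      _ = B * (1 + (α - |y|) ^ 2)⁻¹ := by
          rw [hB_def]
          field_simp
          try ring
  have key := MeasureTheory.norm_integral_le_of_norm_le hint hpt
  have hR : R1op s h y = ∫ α in Set.Ioi (0:ℝ),
      (deriv (Ls s) (y + α) - deriv (Ls s) (y - α)) * Jop α h h y *
        ((1 + (fint α h y) ^ 2)⁻¹ + (1 + (fint (-α) h y) ^ 2)⁻¹) / α := rfl
  rw [← hR, Real.norm_eq_abs] at key
  have hI : ∫ α in Set.Ioi (0:ℝ), B * (1 + (α - |y|) ^ 2)⁻¹ ≤ B * Real.pi := by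
    rw [MeasureTheory.integral_const_mul]
    have h1 : ∫ α in Set.Ioi (0:ℝ), (1 + (α - |y|) ^ 2)⁻¹ ≤ ∫ α : ℝ, (1 + (α - |y|) ^ 2)⁻¹ :=
      setIntegral_le_integral hint0 (Eventually.of_forall fun x => by positivity)
    have h2 : (∫ α : ℝ, (1 + (α - |y|) ^ 2)⁻¹) = Real.pi := by
      rw [integral_sub_right_eq_self (fun x : ℝ => (1 + x ^ 2)⁻¹) |y|]
      exact integral_univ_inv_one_add_sq
    exact mul_le_mul_of_nonneg_left (h1.trans h2.le) hB0
  refine (key.trans hI).trans ?_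
  have ht : (0:ℝ) ≤ s * M ^ 2 * |y| * (1 + y ^ 2)⁻¹ := by positivity
  have hπ2 : Real.pi < 3.15 := Real.pi_lt_d2
  have hBe : B = 52 * (s * M ^ 2 * |y| * (1 + y ^ 2)⁻¹) := by
    rw [hB_def]; field_simp
  rw [hBe]
  nlinarith [mul_le_mul_of_nonneg_left hπ2.le ht, Real.pi_pos]
end

section
/- There is an absolute constant C such that for all differentiable g₁, g₂ : ℝ → ℝ with g_i and g_i' square-integrable, and for every α ≠ 0: ∫_ℝ |Δ_α g₁(y)·Δ_α g₂(y)| dy + ( ∫_ℝ |Δ_α g₁(y)·Δ_α g₂(y)|² dy )^{1/2} ≤ C·min{ |α|^{−1/2}, |α|^{−3/2} }·‖g₁‖_{H¹}·‖g₂‖_{H¹}. -/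
open MeasureTheory Real Set Filter
open scoped ENNReal
open scoped Interval

namespace SlopeAux

/-- Cauchy–Schwarz on a set of finite measure. -/
lemma cs_set {f : ℝ → ℝ} (hf : MemLp f 2 (volume : Measure ℝ)) {s : Set ℝ}
    [IsFiniteMeasure ((volume : Measure ℝ).restrict s)] :
    ∫ z in s, |f z| ≤ Real.sqrt (volume s).toReal * Real.sqrt (∫ z in s, f z ^ 2) := by
  have hconj : Real.HolderConjugate 2 2 := Real.HolderConjugate.two_two
  have h2 : (ENNReal.ofReal (2:ℝ)) = 2 := by simp [ENNReal.ofReal_ofNat]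
  have hfa : MemLp (fun z => |f z|) (ENNReal.ofReal 2) ((volume : Measure ℝ).restrict s) := by
    rw [h2]; exact (hf.restrict s).abs
  have hone : MemLp (fun _ : ℝ => (1:ℝ)) (ENNReal.ofReal 2) ((volume : Measure ℝ).restrict s) := by
    rw [h2]; exact memLp_const 1
  have h := integral_mul_le_Lp_mul_Lq_of_nonneg (μ := (volume : Measure ℝ).restrict s) hconj
    (Filter.Eventually.of_forall fun z => abs_nonneg (f z))
    (Filter.Eventually.of_forall fun _ => zero_le_one) hfa hone
  simp only [mul_one] at h
  have e1 : (∫ z in s, |f z| ^ (2:ℝ)) = ∫ z in s, f z ^ 2 := by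
    refine integral_congr_ae (Filter.Eventually.of_forall fun z => ?_)
    simp only []
    rw [show |f z| ^ (2:ℝ) = |f z| ^ (2:ℕ) by rw [← Real.rpow_natCast]; norm_num]
    rw [sq_abs]
  have e2 : (∫ _z in s, (1:ℝ) ^ (2:ℝ)) = (volume s).toReal := by
    simp [Measure.restrict_apply_univ, Measure.real]
  rw [e1, e2] at h
  calc ∫ z in s, |f z| ≤ (∫ z in s, f z ^ 2) ^ ((1:ℝ)/2) * ((volume s).toReal) ^ ((1:ℝ)/2) := h
    _ = Real.sqrt (volume s).toReal * Real.sqrt (∫ z in s, f z ^ 2) := by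
        rw [Real.sqrt_eq_rpow, Real.sqrt_eq_rpow]; ring

/-- Global Cauchy–Schwarz. -/
lemma cs_global {u v : ℝ → ℝ} (hu : MemLp u 2 (volume : Measure ℝ))
    (hv : MemLp v 2 (volume : Measure ℝ)) :
    ∫ y : ℝ, |u y * v y| ≤ Real.sqrt (∫ y : ℝ, u y ^ 2) * Real.sqrt (∫ y : ℝ, v y ^ 2) := by
  have hconj : Real.HolderConjugate 2 2 := Real.HolderConjugate.two_two
  have h2 : (ENNReal.ofReal (2:ℝ)) = 2 := by simp [ENNReal.ofReal_ofNat]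
  have hua : MemLp (fun z => |u z|) (ENNReal.ofReal 2) (volume : Measure ℝ) := by
    rw [h2]; exact hu.abs
  have hva : MemLp (fun z => |v z|) (ENNReal.ofReal 2) (volume : Measure ℝ) := by
    rw [h2]; exact hv.abs
  have h := integral_mul_le_Lp_mul_Lq_of_nonneg (μ := (volume : Measure ℝ)) hconj
    (Filter.Eventually.of_forall fun z => abs_nonneg (u z))
    (Filter.Eventually.of_forall fun z => abs_nonneg (v z)) hua hva
  have e1 : (∫ z : ℝ, |u z| ^ (2:ℝ)) = ∫ z : ℝ, u z ^ 2 := by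
    refine integral_congr_ae (Filter.Eventually.of_forall fun z => ?_)
    simp only []
    rw [show |u z| ^ (2:ℝ) = |u z| ^ (2:ℕ) by rw [← Real.rpow_natCast]; norm_num, sq_abs]
  have e2 : (∫ z : ℝ, |v z| ^ (2:ℝ)) = ∫ z : ℝ, v z ^ 2 := by
    refine integral_congr_ae (Filter.Eventually.of_forall fun z => ?_)
    simp only []
    rw [show |v z| ^ (2:ℝ) = |v z| ^ (2:ℕ) by rw [← Real.rpow_natCast]; norm_num, sq_abs]
  rw [e1, e2] at h
  calc ∫ y : ℝ, |u y * v y| = ∫ y : ℝ, |u y| * |v y| := by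
        refine integral_congr_ae (Filter.Eventually.of_forall fun z => ?_)
        exact abs_mul _ _
    _ ≤ (∫ y : ℝ, u y ^ 2) ^ ((1:ℝ)/2) * (∫ y : ℝ, v y ^ 2) ^ ((1:ℝ)/2) := h
    _ = Real.sqrt (∫ y : ℝ, u y ^ 2) * Real.sqrt (∫ y : ℝ, v y ^ 2) := by
        rw [Real.sqrt_eq_rpow, Real.sqrt_eq_rpow]

/-- FTC + Cauchy–Schwarz pointwise bound. -/
lemma ftc_bound {g : ℝ → ℝ} (hg : Differentiable ℝ g)
    (hg' : MemLp (deriv g) 2 (volume : Measure ℝ)) (y α : ℝ) :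
    |g y - g (y - α)| ≤ Real.sqrt |α| * Real.sqrt (∫ z in Ι (y - α) y, deriv g z ^ 2) := by
  haveI : IsFiniteMeasure ((volume : Measure ℝ).restrict (Ι (y - α) y)) := by
    rw [Set.uIoc]; infer_instance
  have hint : IntervalIntegrable (deriv g) volume (y - α) y := by
    rw [intervalIntegrable_iff]
    exact (hg'.restrict _).integrable one_le_two
  have hftc : ∫ z in (y - α)..y, deriv g z = g y - g (y - α) :=
    intervalIntegral.integral_deriv_eq_sub (fun x _ => hg x) hint
  have hvol : (volume (Ι (y - α) y)).toReal = |α| := by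
    rw [Set.uIoc, Real.volume_Ioc, ENNReal.toReal_ofReal
      (by simp [sub_nonneg, le_max_iff, min_le_iff] : (0:ℝ) ≤ (y - α) ⊔ y - (y - α) ⊓ y)]
    rw [max_sub_min_eq_abs]; rw [show y - (y - α) = α by ring]
  calc |g y - g (y - α)| = ‖∫ z in (y - α)..y, deriv g z‖ := by rw [hftc, Real.norm_eq_abs]
    _ ≤ ∫ z in Ι (y - α) y, ‖deriv g z‖ := intervalIntegral.norm_integral_le_integral_norm_uIoc
    _ = ∫ z in Ι (y - α) y, |deriv g z| := by simp [Real.norm_eq_abs]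
    _ ≤ Real.sqrt (volume (Ι (y - α) y)).toReal
          * Real.sqrt (∫ z in Ι (y - α) y, deriv g z ^ 2) := cs_set hg'
    _ = Real.sqrt |α| * Real.sqrt (∫ z in Ι (y - α) y, deriv g z ^ 2) := by rw [hvol]

/-- Pointwise sup bound on the slope. -/
lemma slope_sup {g : ℝ → ℝ} (hg : Differentiable ℝ g)
    (hg' : MemLp (deriv g) 2 (volume : Measure ℝ)) {α : ℝ} (hα : α ≠ 0) (y : ℝ) :
    |slopeOp α g y| ≤ Real.sqrt (∫ z : ℝ, deriv g z ^ 2) / Real.sqrt |α| := by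
  have hαpos : (0:ℝ) < |α| := abs_pos.mpr hα
  haveI : IsFiniteMeasure ((volume : Measure ℝ).restrict (Ι (y - α) y)) := by
    rw [Set.uIoc]; infer_instance
  have hset : (∫ z in Ι (y - α) y, deriv g z ^ 2) ≤ ∫ z : ℝ, deriv g z ^ 2 :=
    setIntegral_le_integral hg'.integrable_sq
      (Filter.Eventually.of_forall fun z => sq_nonneg _)
  have h1 := ftc_bound hg hg' y α
  have h2 : |slopeOp α g y| = |g y - g (y - α)| / |α| := by
    rw [slopeOp, abs_div]
  rw [h2, div_le_div_iff₀ hαpos (Real.sqrt_pos.mpr hαpos)]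
  calc |g y - g (y - α)| * Real.sqrt |α|
      ≤ (Real.sqrt |α| * Real.sqrt (∫ z in Ι (y - α) y, deriv g z ^ 2)) * Real.sqrt |α| :=
        mul_le_mul_of_nonneg_right h1 (Real.sqrt_nonneg _)
    _ = (Real.sqrt |α| * Real.sqrt |α|) * Real.sqrt (∫ z in Ι (y - α) y, deriv g z ^ 2) := by ring
    _ = |α| * Real.sqrt (∫ z in Ι (y - α) y, deriv g z ^ 2) := by
        rw [Real.mul_self_sqrt (le_of_lt hαpos)]
    _ ≤ Real.sqrt (∫ z : ℝ, deriv g z ^ 2) * |α| := by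
        rw [mul_comm]; gcongr

/-- Membership of the slope in L². -/
lemma slope_memL2 {g : ℝ → ℝ} (hg2 : MemLp g 2 (volume : Measure ℝ)) (α : ℝ) :
    MemLp (slopeOp α g) 2 (volume : Measure ℝ) := by
  have h1 : MemLp (fun y => g (y - α)) 2 (volume : Measure ℝ) :=
    hg2.comp_measurePreserving (measurePreserving_sub_right volume α)
  have h2 : MemLp (fun y => g y - g (y - α)) 2 (volume : Measure ℝ) := hg2.sub h1
  have h3 := h2.const_mul (α⁻¹)
  have : slopeOp α g = fun y => α⁻¹ * (g y - g (y - α)) := by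
    funext y; rw [slopeOp, div_eq_inv_mul]
  rw [this]; exact h3

/-- L² bound of the slope in terms of `g` itself. -/
lemma slope_L2_of_self {g : ℝ → ℝ} (hg2 : MemLp g 2 (volume : Measure ℝ)) {α : ℝ} (hα : α ≠ 0) :
    ∫ y : ℝ, slopeOp α g y ^ 2 ≤ (2 / |α|) ^ 2 * ∫ y : ℝ, g y ^ 2 := by
  have hαpos : (0:ℝ) < |α| := abs_pos.mpr hα
  have h1 : MemLp (fun y => g (y - α)) 2 (volume : Measure ℝ) :=
    hg2.comp_measurePreserving (measurePreserving_sub_right volume α)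
  have hint : Integrable (fun y => (2 / α ^ 2) * (g y ^ 2 + g (y - α) ^ 2)) volume :=
    (hg2.integrable_sq.add h1.integrable_sq).const_mul _
  have hmono : ∫ y : ℝ, slopeOp α g y ^ 2
      ≤ ∫ y : ℝ, (2 / α ^ 2) * (g y ^ 2 + g (y - α) ^ 2) := by
    refine integral_mono_of_nonneg (Filter.Eventually.of_forall fun y => sq_nonneg _) hint
      (Filter.Eventually.of_forall fun y => ?_)
    simp only [slopeOp]
    rw [div_pow, div_mul_eq_mul_div, div_le_div_iff_of_pos_right (by positivity : (0:ℝ) < α ^ 2)]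
    nlinarith [sq_nonneg (g y + g (y - α))]
  have heq : ∫ y : ℝ, (2 / α ^ 2) * (g y ^ 2 + g (y - α) ^ 2)
      = (2 / α ^ 2) * ((∫ y : ℝ, g y ^ 2) + ∫ y : ℝ, g (y - α) ^ 2) := by
    rw [integral_const_mul, integral_add hg2.integrable_sq h1.integrable_sq]
  have htrans : (∫ y : ℝ, g (y - α) ^ 2) = ∫ y : ℝ, g y ^ 2 :=
    integral_sub_right_eq_self (fun y => g y ^ 2) α
  calc ∫ y : ℝ, slopeOp α g y ^ 2 ≤ (2 / α ^ 2) * ((∫ y : ℝ, g y ^ 2) + ∫ y : ℝ, g y ^ 2) := by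
        rw [heq, htrans] at hmono; exact hmono
    _ = (2 / |α|) ^ 2 * ∫ y : ℝ, g y ^ 2 := by
        rw [div_pow, sq_abs]; ring

/-- L² bound of the slope by the derivative, via Tonelli. -/
lemma slope_L2_of_deriv {g : ℝ → ℝ} (hg : Differentiable ℝ g)
    (hg' : MemLp (deriv g) 2 (volume : Measure ℝ)) {α : ℝ} (hα : α ≠ 0) :
    ∫ y : ℝ, slopeOp α g y ^ 2 ≤ ∫ z : ℝ, deriv g z ^ 2 := by
  have hαpos : (0:ℝ) < |α| := abs_pos.mpr hα
  set φ : ℝ → ℝ≥0∞ := fun z => ENNReal.ofReal (deriv g z ^ 2) with hφ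
  have hφm : Measurable φ := ((measurable_deriv g).pow_const 2).ennreal_ofReal
  have hc : Continuous (slopeOp α g) :=
    ((hg.continuous).sub ((hg.continuous).comp (continuous_id.sub continuous_const))).div_const α
  -- pointwise bound
  have hpt : ∀ y : ℝ, ENNReal.ofReal (slopeOp α g y ^ 2)
      ≤ ENNReal.ofReal (1 / |α|) * ∫⁻ z in Ι (y - α) y, φ z := by
    intro y
    haveI : IsFiniteMeasure ((volume : Measure ℝ).restrict (Ι (y - α) y)) := by
      rw [Set.uIoc]; infer_instance
    have hIint : Integrable (fun z => deriv g z ^ 2) ((volume : Measure ℝ).restrict (Ι (y - α) y)) :=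
      (hg'.restrict _).integrable_sq
    have hInn : (0:ℝ) ≤ ∫ z in Ι (y - α) y, deriv g z ^ 2 :=
      setIntegral_nonneg measurableSet_uIoc fun z _ => sq_nonneg _
    have hflt : (∫⁻ z in Ι (y - α) y, φ z)
        = ENNReal.ofReal (∫ z in Ι (y - α) y, deriv g z ^ 2) :=
      (ofReal_integral_eq_lintegral_ofReal hIint
        (Filter.Eventually.of_forall fun z => sq_nonneg _)).symm
    rw [hflt, ← ENNReal.ofReal_mul (by positivity)]
    apply ENNReal.ofReal_le_ofReal
    have hb := ftc_bound hg hg' y α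
    have hsq : (g y - g (y - α)) ^ 2 ≤ |α| * ∫ z in Ι (y - α) y, deriv g z ^ 2 := by
      have := mul_self_le_mul_self (abs_nonneg _) hb
      calc (g y - g (y - α)) ^ 2 = |g y - g (y - α)| * |g y - g (y - α)| := by
            rw [sq]; exact (abs_mul_abs_self _).symm
        _ ≤ (Real.sqrt |α| * Real.sqrt (∫ z in Ι (y - α) y, deriv g z ^ 2))
            * (Real.sqrt |α| * Real.sqrt (∫ z in Ι (y - α) y, deriv g z ^ 2)) := this
        _ = (Real.sqrt |α| * Real.sqrt |α|)
            * (Real.sqrt (∫ z in Ι (y - α) y, deriv g z ^ 2)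
               * Real.sqrt (∫ z in Ι (y - α) y, deriv g z ^ 2)) := by ring
        _ = |α| * ∫ z in Ι (y - α) y, deriv g z ^ 2 := by
            rw [Real.mul_self_sqrt (le_of_lt hαpos), Real.mul_self_sqrt hInn]
    have : slopeOp α g y ^ 2 = (g y - g (y - α)) ^ 2 / α ^ 2 := by
      rw [slopeOp, div_pow]
    have habs2 : α ^ 2 = |α| * |α| := by rw [← sq_abs]; ring
    have e : 1 / |α| * (∫ z in Ι (y - α) y, deriv g z ^ 2) * α ^ 2
        = |α| * ∫ z in Ι (y - α) y, deriv g z ^ 2 := by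
      rw [habs2]; field_simp [ne_of_gt hαpos]
    rw [this, div_le_iff₀ (by positivity : (0:ℝ) < α ^ 2)]
    rw [e]; exact hsq
  -- the set swap
  have hiff : ∀ z y : ℝ, z ∈ Ι (y - α) y ↔ y ∈ Ico (z + α ⊓ 0) (z + α ⊔ 0) := by
    intro z y
    rcases le_total 0 α with h | h
    · rw [Set.uIoc_of_le (by linarith : y - α ≤ y)]
      rw [min_eq_right h, max_eq_left h]
      simp only [Set.mem_Ioc, Set.mem_Ico, add_zero]
      constructor <;> rintro ⟨u, v⟩ <;> exact ⟨by linarith, by linarith⟩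
    · rw [Set.uIoc_comm, Set.uIoc_of_le (by linarith : y ≤ y - α)]
      rw [min_eq_left h, max_eq_right h]
      simp only [Set.mem_Ioc, Set.mem_Ico, add_zero]
      constructor <;> rintro ⟨u, v⟩ <;> exact ⟨by linarith, by linarith⟩
  have hswap : ∫⁻ y : ℝ, ∫⁻ z : ℝ, (Ι (y - α) y).indicator φ z ∂volume ∂volume
      = ∫⁻ z : ℝ, ∫⁻ y : ℝ, (Ι (y - α) y).indicator φ z ∂volume ∂volume := by
    apply lintegral_lintegral_swap
    have hSm : MeasurableSet {p : ℝ × ℝ | p.2 ∈ Ι (p.1 - α) p.1} := by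
      have : {p : ℝ × ℝ | p.2 ∈ Ι (p.1 - α) p.1}
          = {p : ℝ × ℝ | (p.1 - α) ⊓ p.1 < p.2} ∩ {p : ℝ × ℝ | p.2 ≤ (p.1 - α) ⊔ p.1} := by
        ext p; simp [Set.uIoc, Set.mem_Ioc]
      rw [this]
      exact (measurableSet_lt (((measurable_fst.sub measurable_const)).min measurable_fst)
          measurable_snd).inter
        (measurableSet_le measurable_snd
          (((measurable_fst.sub measurable_const)).max measurable_fst))
    have heq : (Function.uncurry fun y z : ℝ => (Ι (y - α) y).indicator φ z)
        = {p : ℝ × ℝ | p.2 ∈ Ι (p.1 - α) p.1}.indicator (fun p => φ p.2) := by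
      funext p
      simp only [Function.uncurry]
      by_cases h : p.2 ∈ Ι (p.1 - α) p.1
      · rw [Set.indicator_of_mem h, Set.indicator_of_mem (by exact h)]
      · rw [Set.indicator_of_notMem h, Set.indicator_of_notMem (by exact h)]
    rw [heq]
    exact ((hφm.comp measurable_snd).indicator hSm).aemeasurable
  have hinner : ∀ z : ℝ, (∫⁻ y : ℝ, (Ι (y - α) y).indicator φ z ∂volume)
      = φ z * ENNReal.ofReal |α| := by
    intro z
    have : ∀ y : ℝ, (Ι (y - α) y).indicator φ z
        = (Ico (z + α ⊓ 0) (z + α ⊔ 0)).indicator (fun _ => φ z) y := by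
      intro y
      by_cases h : z ∈ Ι (y - α) y
      · rw [Set.indicator_of_mem h, Set.indicator_of_mem ((hiff z y).mp h)]
      · rw [Set.indicator_of_notMem h,
          Set.indicator_of_notMem (fun hy => h ((hiff z y).mpr hy))]
    simp_rw [this]
    rw [lintegral_indicator_const measurableSet_Ico, Real.volume_Ico]
    congr 1
    rw [show z + α ⊔ 0 - (z + α ⊓ 0) = α ⊔ 0 - α ⊓ 0 by ring, max_sub_min_eq_abs]
    rw [abs_sub_comm, sub_zero]
  -- put everything together at the lintegral level
  have hmain : (∫⁻ y : ℝ, ENNReal.ofReal (slopeOp α g y ^ 2)) ≤ ∫⁻ z : ℝ, φ z := by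
    calc (∫⁻ y : ℝ, ENNReal.ofReal (slopeOp α g y ^ 2))
        ≤ ∫⁻ y : ℝ, ENNReal.ofReal (1 / |α|) * ∫⁻ z in Ι (y - α) y, φ z :=
          lintegral_mono hpt
      _ = ENNReal.ofReal (1 / |α|) * ∫⁻ y : ℝ, ∫⁻ z in Ι (y - α) y, φ z :=
          lintegral_const_mul' _ _ ENNReal.ofReal_ne_top
      _ = ENNReal.ofReal (1 / |α|)
          * ∫⁻ y : ℝ, ∫⁻ z : ℝ, (Ι (y - α) y).indicator φ z ∂volume := by
          congr 1
          refine lintegral_congr fun y => ?_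
          rw [lintegral_indicator measurableSet_uIoc]
      _ = ENNReal.ofReal (1 / |α|)
          * ∫⁻ z : ℝ, ∫⁻ y : ℝ, (Ι (y - α) y).indicator φ z ∂volume := by rw [hswap]
      _ = ENNReal.ofReal (1 / |α|) * ∫⁻ z : ℝ, φ z * ENNReal.ofReal |α| := by
          congr 1
          exact lintegral_congr hinner
      _ = ENNReal.ofReal (1 / |α|) * ((∫⁻ z : ℝ, φ z) * ENNReal.ofReal |α|) := by
          rw [lintegral_mul_const _ hφm]
      _ = (ENNReal.ofReal (1 / |α|) * ENNReal.ofReal |α|) * ∫⁻ z : ℝ, φ z := by ring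
      _ = ∫⁻ z : ℝ, φ z := by
          rw [← ENNReal.ofReal_mul (by positivity), one_div, inv_mul_cancel₀ (ne_of_gt hαpos)]
          simp
  -- back to real integrals
  have hφint : (∫⁻ z : ℝ, φ z) = ENNReal.ofReal (∫ z : ℝ, deriv g z ^ 2) :=
    (ofReal_integral_eq_lintegral_ofReal hg'.integrable_sq
      (Filter.Eventually.of_forall fun z => sq_nonneg _)).symm
  have hleft : ∫ y : ℝ, slopeOp α g y ^ 2
      = (∫⁻ y : ℝ, ENNReal.ofReal (slopeOp α g y ^ 2)).toReal := by
    rw [integral_eq_lintegral_of_nonneg_ae (Filter.Eventually.of_forall fun y => sq_nonneg _)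
      ((hc.pow 2).aestronglyMeasurable)]
  rw [hleft]
  calc (∫⁻ y : ℝ, ENNReal.ofReal (slopeOp α g y ^ 2)).toReal
      ≤ (∫⁻ z : ℝ, φ z).toReal := by
        apply ENNReal.toReal_mono _ hmain
        rw [hφint]; exact ENNReal.ofReal_ne_top
    _ = ∫ z : ℝ, deriv g z ^ 2 := by
        rw [hφint, ENNReal.toReal_ofReal (integral_nonneg fun z => sq_nonneg _)]

end SlopeAux


set_option maxHeartbeats 1000000 in
/-- `L¹ ∩ L²` bounds for products of slopes of `H¹` functions. -/
theorem slope_product_bound :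
    ∃ C : ℝ, 0 < C ∧ ∀ g₁ g₂ : ℝ → ℝ, Differentiable ℝ g₁ → Differentiable ℝ g₂ →
      MemLp g₁ 2 volume → MemLp (deriv g₁) 2 volume →
      MemLp g₂ 2 volume → MemLp (deriv g₂) 2 volume →
      ∀ α : ℝ, α ≠ 0 →
        (∫ y : ℝ, |slopeOp α g₁ y * slopeOp α g₂ y|)
          + (∫ y : ℝ, |slopeOp α g₁ y * slopeOp α g₂ y| ^ 2) ^ ((1:ℝ)/2)
        ≤ C * min (|α| ^ (-(1:ℝ)/2)) (|α| ^ (-(3:ℝ)/2)) * H1norm g₁ * H1norm g₂ := by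
  refine ⟨6, by norm_num, ?_⟩
  intro g₁ g₂ hd₁ hd₂ h2₁ h2'₁ h2₂ h2'₂ α hα
  have hαpos : (0:ℝ) < |α| := abs_pos.mpr hα
  set s := Real.sqrt |α| with hs_def
  have hs : (0:ℝ) < s := Real.sqrt_pos.mpr hαpos
  have hα_eq : |α| = s ^ 2 := (Real.sq_sqrt hαpos.le).symm
  set a1 := Real.sqrt (∫ y : ℝ, g₁ y ^ 2) with ha1
  set b1 := Real.sqrt (∫ y : ℝ, deriv g₁ y ^ 2) with hb1
  set a2 := Real.sqrt (∫ y : ℝ, g₂ y ^ 2) with ha2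
  set b2 := Real.sqrt (∫ y : ℝ, deriv g₂ y ^ 2) with hb2
  set H1 := H1norm g₁ with hH1
  set H2 := H1norm g₂ with hH2
  have ha1n : 0 ≤ a1 := Real.sqrt_nonneg _
  have hb1n : 0 ≤ b1 := Real.sqrt_nonneg _
  have ha2n : 0 ≤ a2 := Real.sqrt_nonneg _
  have hb2n : 0 ≤ b2 := Real.sqrt_nonneg _
  have hH1n : 0 ≤ H1 := Real.sqrt_nonneg _
  have hH2n : 0 ≤ H2 := Real.sqrt_nonneg _
  have ha1H : a1 ≤ H1 := Real.sqrt_le_sqrt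
    (le_add_of_nonneg_right (integral_nonneg fun y => sq_nonneg _))
  have hb1H : b1 ≤ H1 := Real.sqrt_le_sqrt
    (le_add_of_nonneg_left (integral_nonneg fun y => sq_nonneg _))
  have ha2H : a2 ≤ H2 := Real.sqrt_le_sqrt
    (le_add_of_nonneg_right (integral_nonneg fun y => sq_nonneg _))
  have hb2H : b2 ≤ H2 := Real.sqrt_le_sqrt
    (le_add_of_nonneg_left (integral_nonneg fun y => sq_nonneg _))
  set P := Real.sqrt (∫ y : ℝ, slopeOp α g₁ y ^ 2) with hP_def
  set Q := Real.sqrt (∫ y : ℝ, slopeOp α g₂ y ^ 2) with hQ_def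
  have hPn : 0 ≤ P := Real.sqrt_nonneg _
  have hQn : 0 ≤ Q := Real.sqrt_nonneg _
  have hP1 : P ≤ b1 := Real.sqrt_le_sqrt (SlopeAux.slope_L2_of_deriv hd₁ h2'₁ hα)
  have hQ1 : Q ≤ b2 := Real.sqrt_le_sqrt (SlopeAux.slope_L2_of_deriv hd₂ h2'₂ hα)
  have hP2 : P ≤ 2 / |α| * a1 := by
    calc P ≤ Real.sqrt ((2 / |α|) ^ 2 * ∫ y : ℝ, g₁ y ^ 2) :=
          Real.sqrt_le_sqrt (SlopeAux.slope_L2_of_self h2₁ hα)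
      _ = 2 / |α| * a1 := by
          rw [Real.sqrt_mul (sq_nonneg _), Real.sqrt_sq (by positivity)]
  have hQ2 : Q ≤ 2 / |α| * a2 := by
    calc Q ≤ Real.sqrt ((2 / |α|) ^ 2 * ∫ y : ℝ, g₂ y ^ 2) :=
          Real.sqrt_le_sqrt (SlopeAux.slope_L2_of_self h2₂ hα)
      _ = 2 / |α| * a2 := by
          rw [Real.sqrt_mul (sq_nonneg _), Real.sqrt_sq (by positivity)]
  -- the L¹ term
  have hcs : (∫ y : ℝ, |slopeOp α g₁ y * slopeOp α g₂ y|) ≤ P * Q :=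
    SlopeAux.cs_global (SlopeAux.slope_memL2 h2₁ α) (SlopeAux.slope_memL2 h2₂ α)
  -- the L² term
  have hsup : ∀ y : ℝ, |slopeOp α g₁ y| ≤ b1 / s := fun y =>
    SlopeAux.slope_sup hd₁ h2'₁ hα y
  have hT2 : (∫ y : ℝ, |slopeOp α g₁ y * slopeOp α g₂ y| ^ 2)
      ≤ (b1 / s) ^ 2 * ∫ y : ℝ, slopeOp α g₂ y ^ 2 := by
    have hintR : Integrable (fun y : ℝ => (b1 / s) ^ 2 * slopeOp α g₂ y ^ 2) volume :=
      ((SlopeAux.slope_memL2 h2₂ α).integrable_sq).const_mul _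
    have h1 : (∫ y : ℝ, |slopeOp α g₁ y * slopeOp α g₂ y| ^ 2)
        ≤ ∫ y : ℝ, (b1 / s) ^ 2 * slopeOp α g₂ y ^ 2 := by
      refine integral_mono_of_nonneg (Filter.Eventually.of_forall fun y => sq_nonneg _) hintR
        (Filter.Eventually.of_forall fun y => ?_)
      have h3 : slopeOp α g₁ y ^ 2 ≤ (b1 / s) ^ 2 := by
        rw [← sq_abs (slopeOp α g₁ y)]
        have := hsup y
        nlinarith [abs_nonneg (slopeOp α g₁ y)]
      calc |slopeOp α g₁ y * slopeOp α g₂ y| ^ 2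
          = slopeOp α g₁ y ^ 2 * slopeOp α g₂ y ^ 2 := by
            rw [sq_abs, mul_pow]
        _ ≤ (b1 / s) ^ 2 * slopeOp α g₂ y ^ 2 := by
            apply mul_le_mul_of_nonneg_right h3 (sq_nonneg _)
    rw [integral_const_mul] at h1
    exact h1
  have hR : (∫ y : ℝ, |slopeOp α g₁ y * slopeOp α g₂ y| ^ 2) ^ ((1:ℝ)/2)
      ≤ (b1 / s) * Q := by
    rw [show ((1:ℝ)/2) = 1/2 by norm_num, ← Real.sqrt_eq_rpow]
    calc Real.sqrt (∫ y : ℝ, |slopeOp α g₁ y * slopeOp α g₂ y| ^ 2)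
        ≤ Real.sqrt ((b1 / s) ^ 2 * ∫ y : ℝ, slopeOp α g₂ y ^ 2) := Real.sqrt_le_sqrt hT2
      _ = (b1 / s) * Q := by
          rw [Real.sqrt_mul (sq_nonneg _), Real.sqrt_sq (by positivity)]
  -- rpow computations
  have exp1 : |α| ^ (-(1:ℝ)/2) = s⁻¹ := by
    rw [hα_eq, ← Real.rpow_natCast s 2, ← Real.rpow_mul hs.le,
      show ((2:ℕ):ℝ) * (-(1:ℝ)/2) = -1 by norm_num, Real.rpow_neg_one]
  have exp2 : |α| ^ (-(3:ℝ)/2) = (s ^ 3)⁻¹ := by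
    rw [hα_eq, ← Real.rpow_natCast s 2, ← Real.rpow_mul hs.le,
      show ((2:ℕ):ℝ) * (-(3:ℝ)/2) = -((3:ℕ):ℝ) by norm_num, Real.rpow_neg hs.le,
      Real.rpow_natCast]
  rcases le_total (|α|) 1 with hcase | hcase
  · -- small α : the min is s⁻¹
    have hs1 : s ≤ 1 := by
      rw [hs_def]
      calc Real.sqrt |α| ≤ Real.sqrt 1 := Real.sqrt_le_sqrt hcase
        _ = 1 := Real.sqrt_one
    have hmin : min (|α| ^ (-(1:ℝ)/2)) (|α| ^ (-(3:ℝ)/2)) = s⁻¹ := by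
      rw [exp1, exp2]
      refine min_eq_left (inv_anti₀ (by positivity) (by nlinarith))
    have ht1 : (∫ y : ℝ, |slopeOp α g₁ y * slopeOp α g₂ y|) ≤ H1 * H2 / s := by
      calc (∫ y : ℝ, |slopeOp α g₁ y * slopeOp α g₂ y|) ≤ P * Q := hcs
        _ ≤ b1 * b2 := mul_le_mul hP1 hQ1 hQn hb1n
        _ ≤ H1 * H2 := mul_le_mul hb1H hb2H hb2n hH1n
        _ ≤ H1 * H2 / s := by
            rw [le_div_iff₀ hs]
            nlinarith [mul_nonneg hH1n hH2n]
    have ht2 : (∫ y : ℝ, |slopeOp α g₁ y * slopeOp α g₂ y| ^ 2) ^ ((1:ℝ)/2)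
        ≤ H1 * H2 / s := by
      calc (∫ y : ℝ, |slopeOp α g₁ y * slopeOp α g₂ y| ^ 2) ^ ((1:ℝ)/2)
          ≤ (b1 / s) * Q := hR
        _ = b1 * Q / s := by ring
        _ ≤ H1 * H2 / s := by
            rw [div_le_div_iff_of_pos_right hs]
            exact mul_le_mul hb1H (hQ1.trans hb2H) hQn hH1n
    rw [hmin]
    have he : 6 * s⁻¹ * H1 * H2 = 6 * (H1 * H2 / s) := by ring
    have hpos : 0 ≤ H1 * H2 / s := by positivity
    rw [he]
    linarith
  · -- large α : the min is (s³)⁻¹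
    have hs1 : 1 ≤ s := by
      rw [hs_def]
      calc (1:ℝ) = Real.sqrt 1 := Real.sqrt_one.symm
        _ ≤ Real.sqrt |α| := Real.sqrt_le_sqrt hcase
    have hmin : min (|α| ^ (-(1:ℝ)/2)) (|α| ^ (-(3:ℝ)/2)) = (s ^ 3)⁻¹ := by
      rw [exp1, exp2]
      refine min_eq_right (inv_anti₀ (by positivity) (by nlinarith))
    rw [hα_eq] at hP2 hQ2
    have ht1 : (∫ y : ℝ, |slopeOp α g₁ y * slopeOp α g₂ y|) ≤ 4 * (H1 * H2) / s ^ 3 := by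
      calc (∫ y : ℝ, |slopeOp α g₁ y * slopeOp α g₂ y|) ≤ P * Q := hcs
        _ ≤ (2 / s ^ 2 * a1) * (2 / s ^ 2 * a2) :=
            mul_le_mul hP2 hQ2 hQn (by positivity)
        _ = 4 * (a1 * a2) / s ^ 4 := by ring
        _ ≤ 4 * (H1 * H2) / s ^ 4 := by gcongr
        _ ≤ 4 * (H1 * H2) / s ^ 3 :=
            div_le_div_of_nonneg_left (by positivity) (by positivity)
              (pow_le_pow_right₀ hs1 (by norm_num))
    have ht2 : (∫ y : ℝ, |slopeOp α g₁ y * slopeOp α g₂ y| ^ 2) ^ ((1:ℝ)/2)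
        ≤ 2 * (H1 * H2) / s ^ 3 := by
      calc (∫ y : ℝ, |slopeOp α g₁ y * slopeOp α g₂ y| ^ 2) ^ ((1:ℝ)/2)
          ≤ (b1 / s) * Q := hR
        _ ≤ (b1 / s) * (2 / s ^ 2 * a2) :=
            mul_le_mul_of_nonneg_left hQ2 (by positivity)
        _ = 2 * (b1 * a2) / s ^ 3 := by ring
        _ ≤ 2 * (H1 * H2) / s ^ 3 := by gcongr
    rw [hmin]
    have he : 6 * (s ^ 3)⁻¹ * H1 * H2 = 4 * (H1 * H2) / s ^ 3 + 2 * (H1 * H2) / s ^ 3 := by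
      ring
    rw [he]
    linarith
end
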